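/- arXiv:1001.2408 — 8 statements merged into one kernel-verified Lean document; each statement's English description precedes it below -/
import Mathlib

section
/- For every matrix M in SU(2) there exists a unique real number φ in the closed interval [0,π] such that M is conjugate within SU(2) to the diagonal matrix diag(e^{iφ}, e^{−iφ}); moreover this unique φ satisfies Tr(M) = 2·cos(φ), i.e. φ = arccos(Re(Tr M)/2). -/
open Matrix

noncomputable section

/-- SU(2) as the special unitary group of 2×2 complex matrices. -/
abbrev SU2 : Submonoid (Matrix (Fin 2) (Fin 2) ℂ) := Matrix.specialUnitaryGroup (Fin 2) ℂ

instance : Group SU2 :=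
  { (inferInstance : Monoid SU2) with
    inv := fun A => ⟨star A.val, Matrix.mem_specialUnitaryGroup_iff.mpr
      ⟨Unitary.star_mem (Matrix.mem_specialUnitaryGroup_iff.mp A.2).1, by
        have h2 : A.val.det = 1 := (Matrix.mem_specialUnitaryGroup_iff.mp A.2).2
        simp [Matrix.star_eq_conjTranspose, Matrix.det_conjTranspose, h2]⟩⟩
    inv_mul_cancel := fun A => Subtype.ext (Matrix.mem_specialUnitaryGroup_iff.mp A.2).1.1 }

/-- The angle of an element of SU(2): `arccos(Re(Tr M)/2) ∈ [0, π]`. -/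
def ang (A : SU2) : ℝ := Real.arccos ((A.val.trace).re / 2)

theorem su2_form (M : SU2) : M.val = !![M.val 0 0, M.val 0 1;
      -(starRingEnd ℂ) (M.val 0 1), (starRingEnd ℂ) (M.val 0 0)] ∧
    M.val 0 0 * (starRingEnd ℂ) (M.val 0 0) + M.val 0 1 * (starRingEnd ℂ) (M.val 0 1) = 1 := by
  obtain ⟨hu, hd⟩ := Matrix.mem_specialUnitaryGroup_iff.mp M.2
  have h1 : star M.val * M.val = 1 := hu.1
  have h2 : M.val * M.val.adjugate = 1 := by
    rw [Matrix.mul_adjugate, hd, one_smul]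
  have hstar : star M.val = M.val.adjugate := by
    calc star M.val = star M.val * (M.val * M.val.adjugate) := by rw [h2, mul_one]
    _ = (star M.val * M.val) * M.val.adjugate := by rw [mul_assoc]
    _ = M.val.adjugate := by rw [h1, one_mul]
  have hadj := Matrix.adjugate_fin_two M.val
  have e1 : (star M.val) 0 1 = M.val.adjugate 0 1 := by rw [hstar]
  have e2 : (star M.val) 1 1 = M.val.adjugate 1 1 := by rw [hstar]
  rw [hadj] at e1 e2
  simp [Matrix.star_apply] at e1 e2
  have f1 : M.val 1 0 = -(starRingEnd ℂ) (M.val 0 1) := by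
    have := congrArg (starRingEnd ℂ) e1
    simpa using this
  have f2 : M.val 1 1 = (starRingEnd ℂ) (M.val 0 0) := by
    have := congrArg (starRingEnd ℂ) e2
    simpa using this
  constructor
  · ext i j
    fin_cases i <;> fin_cases j <;> simp [f1, f2]
  · have hdet := hd
    rw [Matrix.det_fin_two, f1, f2] at hdet
    linear_combination hdet

theorem mem_su2 (p q : ℂ) (h : p * (starRingEnd ℂ) p + q * (starRingEnd ℂ) q = 1) :
    !![p, -(starRingEnd ℂ) q; q, (starRingEnd ℂ) p] ∈ SU2 := by
  rw [Matrix.mem_specialUnitaryGroup_iff]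
  refine ⟨⟨?_, ?_⟩, ?_⟩
  · ext i j
    fin_cases i <;> fin_cases j <;>
      simp [Matrix.mul_apply, Fin.sum_univ_two, Matrix.star_apply, Matrix.one_apply] <;>
      ring_nf <;> linear_combination h
  · ext i j
    fin_cases i <;> fin_cases j <;>
      simp [Matrix.mul_apply, Fin.sum_univ_two, Matrix.star_apply, Matrix.one_apply] <;>
      ring_nf <;> linear_combination h
  · rw [Matrix.det_fin_two]
    simp
    linear_combination h

theorem key1 (b : ℂ) (t u s r : ℝ)
    (hbc : b * (starRingEnd ℂ) b = (s:ℂ)^2 - (u:ℂ)^2)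
    (hr : ((r:ℂ))^2 = 2*(s:ℂ)*((s:ℂ)+(u:ℂ)))
    (hrne : ((r:ℂ)) ≠ 0) :
    (!![-Complex.I*((u:ℂ)+(s:ℂ))/r, -(b/r); (starRingEnd ℂ) b/r, Complex.I*((u:ℂ)+(s:ℂ))/r] ∈ SU2) ∧
    !![(t:ℂ)+(u:ℂ)*Complex.I, b; -(starRingEnd ℂ) b, (t:ℂ)-(u:ℂ)*Complex.I] *
      !![-Complex.I*((u:ℂ)+(s:ℂ))/r, -(b/r); (starRingEnd ℂ) b/r, Complex.I*((u:ℂ)+(s:ℂ))/r]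
    = !![-Complex.I*((u:ℂ)+(s:ℂ))/r, -(b/r); (starRingEnd ℂ) b/r, Complex.I*((u:ℂ)+(s:ℂ))/r] *
      !![(t:ℂ)+(s:ℂ)*Complex.I, 0; 0, (t:ℂ)-(s:ℂ)*Complex.I] := by
  constructor
  · have e : !![-Complex.I*((u:ℂ)+(s:ℂ))/r, -(b/r); (starRingEnd ℂ) b/r, Complex.I*((u:ℂ)+(s:ℂ))/r]
        = !![-Complex.I*((u:ℂ)+(s:ℂ))/r, -((starRingEnd ℂ) ((starRingEnd ℂ) b/r));
            (starRingEnd ℂ) b/r, (starRingEnd ℂ) (-Complex.I*((u:ℂ)+(s:ℂ))/r)] := by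
      congr 1 <;> simp [map_div₀, _root_.map_mul, Complex.conj_ofReal] <;> ring
    rw [e]
    apply mem_su2
    simp only [map_div₀, _root_.map_mul, map_neg, Complex.conj_I, Complex.conj_ofReal, map_add, Complex.conj_conj]
    field_simp
    linear_combination hbc - ((u:ℂ)+(s:ℂ))^2 * Complex.I_sq - hr
  · ext i j
    fin_cases i <;> fin_cases j <;>
      simp only [Matrix.mul_apply, Fin.sum_univ_two, Matrix.cons_val', Matrix.cons_val_zero,
        Matrix.cons_val_one, Matrix.head_cons, Matrix.head_fin_const, Matrix.empty_val',
        Matrix.cons_val_fin_one, Fin.isValue, Matrix.of_apply, Fin.zero_eta, Fin.mk_one] <;>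
      field_simp
    · linear_combination hbc + ((s:ℂ)^2 - (u:ℂ)^2) * Complex.I_sq
    · ring
    · ring
    · linear_combination hbc + ((s:ℂ)^2 - (u:ℂ)^2) * Complex.I_sq

theorem key2 (b : ℂ) (t u s r : ℝ)
    (hbc : b * (starRingEnd ℂ) b = (s:ℂ)^2 - (u:ℂ)^2)
    (hr : ((r:ℂ))^2 = 2*(s:ℂ)*((s:ℂ)-(u:ℂ)))
    (hrne : ((r:ℂ)) ≠ 0) :
    (!![b/r, Complex.I*((s:ℂ)-(u:ℂ))/r; Complex.I*((s:ℂ)-(u:ℂ))/r, (starRingEnd ℂ) b/r] ∈ SU2) ∧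
    !![(t:ℂ)+(u:ℂ)*Complex.I, b; -(starRingEnd ℂ) b, (t:ℂ)-(u:ℂ)*Complex.I] *
      !![b/r, Complex.I*((s:ℂ)-(u:ℂ))/r; Complex.I*((s:ℂ)-(u:ℂ))/r, (starRingEnd ℂ) b/r]
    = !![b/r, Complex.I*((s:ℂ)-(u:ℂ))/r; Complex.I*((s:ℂ)-(u:ℂ))/r, (starRingEnd ℂ) b/r] *
      !![(t:ℂ)+(s:ℂ)*Complex.I, 0; 0, (t:ℂ)-(s:ℂ)*Complex.I] := by
  constructor
  · have e : !![b/r, Complex.I*((s:ℂ)-(u:ℂ))/r; Complex.I*((s:ℂ)-(u:ℂ))/r, (starRingEnd ℂ) b/r]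
        = !![b/r, -((starRingEnd ℂ) (Complex.I*((s:ℂ)-(u:ℂ))/r));
            Complex.I*((s:ℂ)-(u:ℂ))/r, (starRingEnd ℂ) (b/r)] := by
      congr 1 <;> simp [map_div₀, _root_.map_mul, Complex.conj_ofReal] <;> ring
    rw [e]
    apply mem_su2
    simp only [map_div₀, _root_.map_mul, map_neg, Complex.conj_I, Complex.conj_ofReal, map_sub]
    field_simp
    linear_combination hbc - ((s:ℂ)-(u:ℂ))^2 * Complex.I_sq - hr
  · ext i j
    fin_cases i <;> fin_cases j <;>
      simp only [Matrix.mul_apply, Fin.sum_univ_two, Matrix.cons_val', Matrix.cons_val_zero,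
        Matrix.cons_val_one, Matrix.head_cons, Matrix.head_fin_const, Matrix.empty_val',
        Matrix.cons_val_fin_one, Fin.isValue, Matrix.of_apply, Fin.zero_eta, Fin.mk_one] <;>
      field_simp
    · ring
    · linear_combination hbc + ((s:ℂ)^2 - (u:ℂ)^2) * Complex.I_sq
    · linear_combination -hbc - ((s:ℂ)^2 - (u:ℂ)^2) * Complex.I_sq
    · ring

theorem conj_diag (M : SU2) : ∃ g : SU2,
    ((g * M * g⁻¹ : SU2) : Matrix (Fin 2) (Fin 2) ℂ) =
      !![Complex.exp ((ang M) * Complex.I), 0; 0, Complex.exp (-((ang M) * Complex.I))] := by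
  obtain ⟨hM, hbc⟩ := su2_form M
  set a := M.val 0 0 with ha
  set b := M.val 0 1 with hb
  set t := a.re with ht
  set u := a.im with hu
  have htr : M.val.trace = a + (starRingEnd ℂ) a := by
    rw [Matrix.trace_fin_two, hM]
    simp
  have htr_re : (M.val.trace).re = 2 * t := by
    rw [htr]; simp [Complex.add_re, Complex.conj_re]; ring
  have hang : ang M = Real.arccos t := by
    unfold ang; rw [htr_re]; ring_nf
  have hreal : t^2 + u^2 + Complex.normSq b = 1 := by
    have : ((Complex.normSq a + Complex.normSq b : ℝ) : ℂ) = 1 := by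
      push_cast
      rw [← Complex.mul_conj, ← Complex.mul_conj]
      exact hbc
    have h' : Complex.normSq a + Complex.normSq b = 1 := by exact_mod_cast this
    rw [Complex.normSq_apply] at h'
    nlinarith [h']
  have ht1 : t^2 ≤ 1 := by nlinarith [Complex.normSq_nonneg b]
  have htm : -1 ≤ t := by nlinarith
  have htp : t ≤ 1 := by nlinarith
  set s := Real.sqrt (1 - t^2) with hsdef
  have hs0 : 0 ≤ s := Real.sqrt_nonneg _
  have hs2 : s^2 = 1 - t^2 := Real.sq_sqrt (by nlinarith)
  have hbn : Complex.normSq b = s^2 - u^2 := by rw [hs2]; nlinarith [hreal]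
  have hu2 : u^2 ≤ s^2 := by nlinarith [Complex.normSq_nonneg b]
  have hcos : Real.cos (ang M) = t := by rw [hang]; exact Real.cos_arccos htm htp
  have hsin : Real.sin (ang M) = s := by rw [hang, Real.sin_arccos]
  have hexp1 : Complex.exp ((ang M) * Complex.I) = (t : ℂ) + (s : ℂ) * Complex.I := by
    rw [Complex.exp_mul_I]
    rw [← Complex.ofReal_cos, ← Complex.ofReal_sin, hcos, hsin]
  have hexp2 : Complex.exp (-((ang M) * Complex.I)) = (t : ℂ) - (s : ℂ) * Complex.I := by
    have : -((ang M : ℂ) * Complex.I) = ((-(ang M) : ℝ) : ℂ) * Complex.I := by push_cast; ring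
    rw [this, Complex.exp_mul_I, ← Complex.ofReal_cos, ← Complex.ofReal_sin,
      Real.cos_neg, Real.sin_neg, hcos, hsin]
    push_cast; ring
  set D : Matrix (Fin 2) (Fin 2) ℂ :=
    !![(t : ℂ) + (s : ℂ) * Complex.I, 0; 0, (t : ℂ) - (s : ℂ) * Complex.I] with hD
  have hDgoal : D = !![Complex.exp ((ang M) * Complex.I), 0; 0,
      Complex.exp (-((ang M) * Complex.I))] := by rw [hexp1, hexp2]
  rw [← hDgoal]
  have haC : a = (t : ℂ) + (u : ℂ) * Complex.I := (Complex.re_add_im a).symm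
  have hcaC : (starRingEnd ℂ) a = (t : ℂ) - (u : ℂ) * Complex.I := by
    rw [haC]; simp [map_add, _root_.map_mul, Complex.conj_ofReal]; ring
  have hbcC : b * (starRingEnd ℂ) b = ((s : ℂ))^2 - ((u : ℂ))^2 := by
    rw [Complex.mul_conj, hbn]; push_cast; ring
  have hM' : M.val = !![(t:ℂ)+(u:ℂ)*Complex.I, b;
      -(starRingEnd ℂ) b, (t:ℂ)-(u:ℂ)*Complex.I] := by
    rw [hM, hcaC, haC]
  by_cases hs : s = 0
  · have hu0 : u = 0 := by nlinarith [hu2, hs]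
    have hb0 : b = 0 := by
      have : Complex.normSq b = 0 := by rw [hbn, hs, hu0]; ring
      exact Complex.normSq_eq_zero.mp this
    refine ⟨1, ?_⟩
    have h1 : ((1 * M * 1⁻¹ : SU2) : Matrix (Fin 2) (Fin 2) ℂ) = M.val := by
      rw [inv_one, one_mul, mul_one]
    rw [h1, hM', hD, hb0]
    ext i j
    fin_cases i <;> fin_cases j <;> simp [hu0, hs]
  · have hspos : 0 < s := lt_of_le_of_ne hs0 (Ne.symm hs)
    rcases le_or_gt 0 u with hup | hun
    · set r := Real.sqrt (2*s*(s+u)) with hrdef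
      have hr2 : r^2 = 2*s*(s+u) := Real.sq_sqrt (by nlinarith)
      have hrpos : 0 < r := Real.sqrt_pos.mpr (by nlinarith)
      have hrne : ((r : ℂ)) ≠ 0 := by
        simpa using Complex.ofReal_ne_zero.mpr (ne_of_gt hrpos)
      have hr2C : ((r:ℂ))^2 = 2*(s:ℂ)*((s:ℂ)+(u:ℂ)) := by
        exact_mod_cast congrArg Complex.ofReal hr2
      obtain ⟨hmem, hK⟩ := key1 b t u s r hbcC hr2C hrne
      set h : SU2 := ⟨_, hmem⟩ with hh
      have hMh : M.val * h.val = h.val * D := by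
        rw [hM']
        exact hK
      refine ⟨h⁻¹, ?_⟩
      have hval : ((h⁻¹ * M * (h⁻¹)⁻¹ : SU2) : Matrix (Fin 2) (Fin 2) ℂ)
          = (h⁻¹).val * M.val * h.val := by rw [inv_inv]; rfl
      rw [hval]
      have hinvval : (h⁻¹).val = star h.val := rfl
      have hunit : star h.val * h.val = 1 :=
        (Matrix.mem_specialUnitaryGroup_iff.mp h.2).1.1
      rw [hinvval, mul_assoc, hMh, ← mul_assoc, hunit, one_mul]
    · set r := Real.sqrt (2*s*(s-u)) with hrdef
      have hsu : 0 < s - u := by linarith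
      have hprod : 0 < 2*s*(s-u) := by positivity
      have hr2 : r^2 = 2*s*(s-u) := Real.sq_sqrt (le_of_lt hprod)
      have hrpos : 0 < r := Real.sqrt_pos.mpr hprod
      have hrne : ((r : ℂ)) ≠ 0 := by
        simpa using Complex.ofReal_ne_zero.mpr (ne_of_gt hrpos)
      have hr2C : ((r:ℂ))^2 = 2*(s:ℂ)*((s:ℂ)-(u:ℂ)) := by
        exact_mod_cast congrArg Complex.ofReal hr2
      obtain ⟨hmem, hK⟩ := key2 b t u s r hbcC hr2C hrne
      set h : SU2 := ⟨_, hmem⟩ with hh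
      have hMh : M.val * h.val = h.val * D := by
        rw [hM']
        exact hK
      refine ⟨h⁻¹, ?_⟩
      have hval : ((h⁻¹ * M * (h⁻¹)⁻¹ : SU2) : Matrix (Fin 2) (Fin 2) ℂ)
          = (h⁻¹).val * M.val * h.val := by rw [inv_inv]; rfl
      rw [hval]
      have hinvval : (h⁻¹).val = star h.val := rfl
      have hunit : star h.val * h.val = 1 :=
        (Matrix.mem_specialUnitaryGroup_iff.mp h.2).1.1
      rw [hinvval, mul_assoc, hMh, ← mul_assoc, hunit, one_mul]

theorem trace_of_conj (M : SU2) (φ : ℝ)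
    (hg : ∃ g : SU2, ((g * M * g⁻¹ : SU2) : Matrix (Fin 2) (Fin 2) ℂ) =
      !![Complex.exp (φ * Complex.I), 0; 0, Complex.exp (-(φ * Complex.I))]) :
    M.val.trace = ((2 * Real.cos φ : ℝ) : ℂ) := by
  obtain ⟨g, hgM⟩ := hg
  have hgg : (g⁻¹).val * g.val = (1 : Matrix (Fin 2) (Fin 2) ℂ) :=
    congrArg Subtype.val (inv_mul_cancel g)
  have h1 : ((g * M * g⁻¹ : SU2) : Matrix (Fin 2) (Fin 2) ℂ)
      = g.val * M.val * (g⁻¹).val := rfl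
  have htr : M.val.trace
      = (!![Complex.exp (φ * Complex.I), 0; 0, Complex.exp (-(φ * Complex.I))] :
          Matrix (Fin 2) (Fin 2) ℂ).trace := by
    calc M.val.trace = ((g⁻¹).val * g.val * M.val).trace := by rw [hgg, one_mul]
    _ = (g.val * M.val * (g⁻¹).val).trace := by
        rw [mul_assoc]; exact (Matrix.trace_mul_comm _ _).symm
    _ = _ := by rw [← h1, hgM]
  rw [htr, Matrix.trace_fin_two]
  simp only [Matrix.cons_val', Matrix.cons_val_zero, Matrix.cons_val_one, Matrix.head_cons,
    Matrix.empty_val', Matrix.cons_val_fin_one, Matrix.head_fin_const, Matrix.of_apply]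
  rw [Complex.exp_mul_I]
  have h2 : -((φ:ℂ) * Complex.I) = ((-φ : ℝ) : ℂ) * Complex.I := by push_cast; ring
  rw [h2, Complex.exp_mul_I, ← Complex.ofReal_cos, ← Complex.ofReal_sin,
    ← Complex.ofReal_cos, ← Complex.ofReal_sin, Real.cos_neg, Real.sin_neg]
  push_cast
  ring

/-- Every element of SU(2) is conjugate to a unique diagonal matrix
`diag(e^{iφ}, e^{−iφ})` with `φ ∈ [0, π]`; moreover this unique `φ` satisfies
`Tr M = 2 cos φ`, i.e. `φ = arccos(Re(Tr M)/2)`. -/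
theorem stmt0 (M : SU2) :
    (∃! φ : ℝ, φ ∈ Set.Icc 0 Real.pi ∧
      ∃ g : SU2, ((g * M * g⁻¹ : SU2) : Matrix (Fin 2) (Fin 2) ℂ) =
        !![Complex.exp (φ * Complex.I), 0; 0, Complex.exp (-(φ * Complex.I))]) ∧
    (∀ φ : ℝ, φ ∈ Set.Icc 0 Real.pi →
      (∃ g : SU2, ((g * M * g⁻¹ : SU2) : Matrix (Fin 2) (Fin 2) ℂ) =
        !![Complex.exp (φ * Complex.I), 0; 0, Complex.exp (-(φ * Complex.I))]) →
      M.val.trace = ((2 * Real.cos φ : ℝ) : ℂ) ∧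
      φ = Real.arccos ((M.val.trace).re / 2)) := by
  have hchar : ∀ φ : ℝ, φ ∈ Set.Icc 0 Real.pi →
      (∃ g : SU2, ((g * M * g⁻¹ : SU2) : Matrix (Fin 2) (Fin 2) ℂ) =
        !![Complex.exp (φ * Complex.I), 0; 0, Complex.exp (-(φ * Complex.I))]) →
      M.val.trace = ((2 * Real.cos φ : ℝ) : ℂ) ∧
      φ = Real.arccos ((M.val.trace).re / 2) := by
    intro φ hφ hg
    have htr := trace_of_conj M φ hg
    refine ⟨htr, ?_⟩
    rw [htr]
    simp only [Complex.ofReal_re]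
    rw [show (2 * Real.cos φ) / 2 = Real.cos φ by ring]
    exact (Real.arccos_cos hφ.1 hφ.2).symm
  refine ⟨⟨ang M, ⟨⟨Real.arccos_nonneg _, Real.arccos_le_pi _⟩, conj_diag M⟩, ?_⟩, hchar⟩
  intro y hy
  exact (hchar y hy.1 hy.2).2

end
end

section
/- For all A, B in SU(2), the angle of the product satisfies the inequalities |ang(A) − ang(B)| ≤ ang(AB) and ang(AB) ≤ min(ang(A) + ang(B), 2π − ang(A) − ang(B)). -/
open Matrix

noncomputable section

lemma su2_star_eq_adjugate (A : SU2) : star A.val = A.val.adjugate := by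
  have hu := (Matrix.mem_specialUnitaryGroup_iff.mp A.2).1
  have hdet : A.val.det = 1 := (Matrix.mem_specialUnitaryGroup_iff.mp A.2).2
  have h1 : star A.val * A.val = 1 := hu.1
  have h2 : A.val * A.val.adjugate = 1 := by
    rw [Matrix.mul_adjugate, hdet, one_smul]
  calc star A.val = star A.val * (A.val * A.val.adjugate) := by rw [h2, mul_one]
    _ = (star A.val * A.val) * A.val.adjugate := by rw [mul_assoc]
    _ = A.val.adjugate := by rw [h1, one_mul]

lemma su2_entries (A : SU2) :
    A.val 1 1 = starRingEnd ℂ (A.val 0 0) ∧ A.val 1 0 = -starRingEnd ℂ (A.val 0 1) ∧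
    Complex.normSq (A.val 0 0) + Complex.normSq (A.val 0 1) = 1 := by
  have h := su2_star_eq_adjugate A
  have hdet : A.val.det = 1 := (Matrix.mem_specialUnitaryGroup_iff.mp A.2).2
  have h00 := congrFun (congrFun h 0) 0
  have h01 := congrFun (congrFun h 0) 1
  simp [Matrix.star_eq_conjTranspose, Matrix.conjTranspose_apply, Matrix.adjugate_fin_two] at h00 h01
  refine ⟨by rw [← h00], by rw [← Complex.conj_conj (A.val 1 0), h01]; simp, ?_⟩
  rw [Matrix.det_fin_two, ← h00, ← Complex.conj_conj (A.val 1 0), h01] at hdet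
  have : (A.val 0 0 * starRingEnd ℂ (A.val 0 0) + A.val 0 1 * starRingEnd ℂ (A.val 0 1) : ℂ) = 1 := by
    rw [← hdet, map_neg]; ring
  rw [Complex.mul_conj, Complex.mul_conj] at this
  exact_mod_cast this

open Real in
lemma angle_ineq {α β t : ℝ} (hα0 : 0 ≤ α) (hαπ : α ≤ π) (hβ0 : 0 ≤ β) (hβπ : β ≤ π)
    (h1 : Real.cos (α + β) ≤ t) (h2 : t ≤ Real.cos (α - β)) :
    |α - β| ≤ Real.arccos t ∧ Real.arccos t ≤ min (α + β) (2 * π - α - β) := by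
  have ht1 : (-1 : ℝ) ≤ t := le_trans (Real.neg_one_le_cos _) h1
  have mono : ∀ x y : ℝ, x ≤ y → Real.arccos y ≤ Real.arccos x := by
    intro x y hxy
    unfold Real.arccos
    have := Real.monotone_arcsin hxy
    linarith
  constructor
  · have habs : |α - β| ≤ π := abs_le.mpr ⟨by linarith, by linarith⟩
    have he : |α - β| = Real.arccos (Real.cos |α - β|) :=
      (Real.arccos_cos (abs_nonneg _) habs).symm
    rw [he, Real.cos_abs]
    exact mono _ _ h2
  · refine le_min ?_ ?_
    · by_cases h : α + β ≤ π
      · calc Real.arccos t ≤ Real.arccos (Real.cos (α + β)) :=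
              mono _ _ h1
          _ = α + β := Real.arccos_cos (by linarith) h
      · linarith [Real.arccos_le_pi t]
    · by_cases h : π ≤ α + β
      · have hc : Real.cos (2 * π - α - β) = Real.cos (α + β) := by
          rw [show 2 * π - α - β = 2 * π - (α + β) by ring, Real.cos_sub]
          simp
        calc Real.arccos t ≤ Real.arccos (Real.cos (2 * π - α - β)) :=
              mono _ _ (by rw [hc]; exact h1)
          _ = 2 * π - α - β := Real.arccos_cos (by linarith) (by linarith)
      · linarith [Real.arccos_le_pi t]

set_option maxHeartbeats 1000000

/-- Triangle inequalities for the angles of a product in SU(2). -/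
theorem stmt2 (A B : SU2) :
    |ang A - ang B| ≤ ang (A * B) ∧
    ang (A * B) ≤ min (ang A + ang B) (2 * Real.pi - ang A - ang B) := by
  obtain ⟨hA11, hA10, hAn⟩ := su2_entries A
  obtain ⟨hB11, hB10, hBn⟩ := su2_entries B
  set a := A.val 0 0 with ha
  set b := A.val 0 1 with hb
  set c := B.val 0 0 with hc
  set d := B.val 0 1 with hd
  set ar := a.re; set ai := a.im; set br := b.re; set bi := b.im
  set cr := c.re; set ci := c.im; set dr := d.re; set di := d.im
  have hAn' : ar ^ 2 + ai ^ 2 + br ^ 2 + bi ^ 2 = 1 := by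
    have := hAn; rw [Complex.normSq_apply, Complex.normSq_apply] at this; nlinarith [this]
  have hBn' : cr ^ 2 + ci ^ 2 + dr ^ 2 + di ^ 2 = 1 := by
    have := hBn; rw [Complex.normSq_apply, Complex.normSq_apply] at this; nlinarith [this]
  have hangA : ang A = Real.arccos ar := by
    unfold ang; congr 1
    rw [Matrix.trace_fin_two, hA11]
    simp [Complex.add_re, Complex.conj_re]
    show ((A.val 0 0).re + (A.val 0 0).re) / 2 = (A.val 0 0).re; ring
  have hangB : ang B = Real.arccos cr := by
    unfold ang; congr 1
    rw [Matrix.trace_fin_two, hB11]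
    simp [Complex.add_re, Complex.conj_re]
    show ((B.val 0 0).re + (B.val 0 0).re) / 2 = (B.val 0 0).re; ring
  set t : ℝ := ar * cr - ai * ci - (br * dr + bi * di) with htdef
  have hangAB : ang (A * B) = Real.arccos t := by
    unfold ang; congr 1
    have hmul : (A * B).val = A.val * B.val := rfl
    rw [hmul, Matrix.trace_fin_two]
    simp only [Matrix.mul_apply, Fin.sum_univ_two]
    rw [hA10, hA11, hB10, hB11]
    simp only [← ha, ← hb, ← hc, ← hd, Complex.add_re, Complex.mul_re, Complex.neg_re,
      Complex.neg_im, Complex.conj_re, Complex.conj_im]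
    ring
  -- bounds
  have har : -1 ≤ ar ∧ ar ≤ 1 := by constructor <;> nlinarith [hAn']
  have hcr : -1 ≤ cr ∧ cr ≤ 1 := by constructor <;> nlinarith [hBn']
  -- Cauchy-Schwarz
  have hX : (1 : ℝ) - ar ^ 2 = ai ^ 2 + br ^ 2 + bi ^ 2 := by linarith
  have hY : (1 : ℝ) - cr ^ 2 = ci ^ 2 + dr ^ 2 + di ^ 2 := by linarith
  have hcs : |ai * ci + br * dr + bi * di| ≤
      Real.sqrt (1 - ar ^ 2) * Real.sqrt (1 - cr ^ 2) := by
    have hsq : (ai * ci + br * dr + bi * di) ^ 2 ≤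
        (ai ^ 2 + br ^ 2 + bi ^ 2) * (ci ^ 2 + dr ^ 2 + di ^ 2) := by
      nlinarith [sq_nonneg (ai * dr - br * ci), sq_nonneg (ai * di - bi * ci),
        sq_nonneg (br * di - bi * dr)]
    have h := Real.sqrt_le_sqrt hsq
    rw [Real.sqrt_sq_eq_abs, Real.sqrt_mul (by positivity)] at h
    rw [hX, hY]
    exact h
  set α := Real.arccos ar
  set β := Real.arccos cr
  have hcosα : Real.cos α = ar := Real.cos_arccos har.1 har.2
  have hcosβ : Real.cos β = cr := Real.cos_arccos hcr.1 hcr.2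
  have hsinα : Real.sin α = Real.sqrt (1 - ar ^ 2) := Real.sin_arccos ar
  have hsinβ : Real.sin β = Real.sqrt (1 - cr ^ 2) := Real.sin_arccos cr
  have habs := abs_le.mp hcs
  have h1 : Real.cos (α + β) ≤ t := by
    rw [Real.cos_add, hcosα, hcosβ, hsinα, hsinβ, htdef]
    linarith [habs.2]
  have h2 : t ≤ Real.cos (α - β) := by
    rw [Real.cos_sub, hcosα, hcosβ, hsinα, hsinβ, htdef]
    linarith [habs.1]
  have key := angle_ineq (Real.arccos_nonneg ar) (Real.arccos_le_pi ar)
    (Real.arccos_nonneg cr) (Real.arccos_le_pi cr) h1 h2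
  rw [hangA, hangB, hangAB]
  exact key

end
end

section
/- If two pairs (A, B) and (A', B') of elements of SU(2) satisfy ang(A) = ang(A'), ang(B) = ang(B') and ang(AB) = ang(A'B'), then the pairs are simultaneously conjugate: there exists g ∈ SU(2) with A' = g·A·g⁻¹ and B' = g·B·g⁻¹. -/
open Matrix

noncomputable section

open Complex

lemma su2_inv_val (g : SU2) : (g⁻¹).val = star g.val := rfl

lemma su2_mul_star (g : SU2) : g.val * star g.val = 1 :=
  (Matrix.mem_specialUnitaryGroup_iff.mp g.2).1.2

lemma su2_star_mul (g : SU2) : star g.val * g.val = 1 :=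
  (Matrix.mem_specialUnitaryGroup_iff.mp g.2).1.1

lemma su2_det (g : SU2) : g.val.det = 1 :=
  (Matrix.mem_specialUnitaryGroup_iff.mp g.2).2

lemma su2_conjT (M : SU2) : M.val.conjTranspose = adjugate M.val := by
  have h1 : M.val * adjugate M.val = 1 := by
    rw [Matrix.mul_adjugate, su2_det]; simp
  have h2 := su2_star_mul M
  calc M.val.conjTranspose = M.val.conjTranspose * (M.val * adjugate M.val) := by rw [h1, mul_one]
    _ = (star M.val * M.val) * adjugate M.val := by
        rw [Matrix.star_eq_conjTranspose, mul_assoc]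
    _ = adjugate M.val := by rw [h2, one_mul]

lemma su2_e11 (M : SU2) : M.val 1 1 = (starRingEnd ℂ) (M.val 0 0) := by
  have := congrFun (congrFun (su2_conjT M) 0) 0
  simp [Matrix.conjTranspose_apply, Matrix.adjugate_fin_two] at this
  rw [← this]

lemma su2_e10 (M : SU2) : M.val 1 0 = -(starRingEnd ℂ) (M.val 0 1) := by
  have := congrFun (congrFun (su2_conjT M) 0) 1
  simp [Matrix.conjTranspose_apply, Matrix.adjugate_fin_two] at this
  have := congrArg (starRingEnd ℂ) this
  simp at this
  exact this


lemma su2_normSq (M : SU2) : normSq (M.val 0 0) + normSq (M.val 0 1) = 1 := by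
  have hd := su2_det M
  rw [Matrix.det_fin_two, su2_e11 M, su2_e10 M] at hd
  have : (normSq (M.val 0 0) : ℂ) + (normSq (M.val 0 1) : ℂ) = 1 := by
    rw [← Complex.mul_conj, ← Complex.mul_conj]; ring_nf; ring_nf at hd; linear_combination hd
  exact_mod_cast this

lemma su2_trace (M : SU2) : M.val.trace = 2 * (M.val 0 0).re := by
  rw [Matrix.trace_fin_two, su2_e11 M, Complex.add_conj]
  norm_num

lemma mk_mem_su2 (x y : ℂ) (h : normSq x + normSq y = 1) :
    !![x, y; -(starRingEnd ℂ) y, (starRingEnd ℂ) x] ∈ SU2 := by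
  have hc : x * (starRingEnd ℂ) x + y * (starRingEnd ℂ) y = 1 := by
    have : ((normSq x + normSq y : ℝ) : ℂ) = 1 := by rw [h]; norm_num
    push_cast at this; rw [← this]; rw [← Complex.mul_conj, ← Complex.mul_conj]
  refine Matrix.mem_specialUnitaryGroup_iff.mpr ⟨Matrix.mem_unitaryGroup_iff.mpr ?_, ?_⟩
  · ext i j
    fin_cases i <;> fin_cases j <;>
      simp [Matrix.mul_apply, Fin.sum_univ_two, Matrix.star_eq_conjTranspose,
        Matrix.conjTranspose_apply, Matrix.one_apply] <;> ring_nf <;>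
      linear_combination hc
  · rw [Matrix.det_fin_two_of]; linear_combination hc

lemma conj_to_diag (M : SU2) (c s : ℝ) (hc : c = (M.val.trace).re / 2)
    (hs : s = Real.sqrt (1 - c ^ 2)) :
    ∃ g : SU2, (g * M * g⁻¹).val =
      !![(c : ℂ) + s * Complex.I, 0; 0, (c : ℂ) - s * Complex.I] := by
  obtain ⟨a, b, hM, hns, hcre⟩ : ∃ a b : ℂ,
      M.val = !![a, b; -(starRingEnd ℂ) b, (starRingEnd ℂ) a] ∧
      normSq a + normSq b = 1 ∧ c = a.re := by
    refine ⟨M.val 0 0, M.val 0 1, ?_, su2_normSq M, by rw [hc, su2_trace]; simp⟩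
    ext i j
    fin_cases i <;> fin_cases j <;> simp [su2_e10, su2_e11]
  have hc2 : c ^ 2 ≤ 1 := by
    rw [hcre]
    nlinarith [Complex.normSq_apply a, sq_nonneg a.im, Complex.normSq_nonneg b, hns]
  have hs2 : s ^ 2 = 1 - c ^ 2 := by rw [hs, Real.sq_sqrt (by linarith)]
  obtain ⟨lam, hlam⟩ : ∃ t : ℂ, t = (c : ℂ) + s * Complex.I := ⟨_, rfl⟩
  obtain ⟨mu, hmu⟩ : ∃ t : ℂ, t = (c : ℂ) - s * Complex.I := ⟨_, rfl⟩
  rw [← hlam, ← hmu]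
  have hconjlam : (starRingEnd ℂ) lam = mu := by
    rw [hlam, hmu]
    simp only [map_add, _root_.map_mul, Complex.conj_ofReal, Complex.conj_I]
    ring
  have hconjmu : (starRingEnd ℂ) mu = lam := by
    rw [hlam, hmu]
    simp only [map_sub, map_add, _root_.map_mul, Complex.conj_ofReal, Complex.conj_I]
    ring
  have hsd : (s : ℂ) ^ 2 = 1 - (c : ℂ) ^ 2 := by
    have := congrArg (fun t : ℝ => (t : ℂ)) hs2; push_cast at this; exact this
  have hlm : lam * mu = 1 := by
    rw [hlam, hmu]; linear_combination (-(s:ℂ)^2) * Complex.I_sq + hsd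
  have hca : a + (starRingEnd ℂ) a = lam + mu := by
    rw [Complex.add_conj, hlam, hmu, hcre]; push_cast; ring
  have hnc : a * (starRingEnd ℂ) a + b * (starRingEnd ℂ) b = 1 := by
    have : ((normSq a + normSq b : ℝ) : ℂ) = 1 := by rw [hns]; norm_num
    push_cast at this; rw [← this, ← Complex.mul_conj, ← Complex.mul_conj]
  obtain ⟨x, hx⟩ : ∃ t : ℂ, t = lam - (starRingEnd ℂ) a := ⟨_, rfl⟩
  by_cases hdeg : normSq x + normSq b = 0
  · have hx0 : x = 0 := Complex.normSq_eq_zero.mp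
      (by nlinarith [Complex.normSq_nonneg x, Complex.normSq_nonneg b])
    have hb0 : b = 0 := Complex.normSq_eq_zero.mp
      (by nlinarith [Complex.normSq_nonneg x, Complex.normSq_nonneg b])
    have hamu : a = mu := by
      have h1 : (starRingEnd ℂ) a = lam := by rw [hx0] at hx; linear_combination hx
      have := congrArg (starRingEnd ℂ) h1
      rwa [Complex.conj_conj, hconjlam] at this
    have hmem : !![(0:ℂ), 1; -1, 0] ∈ SU2 := by simpa using mk_mem_su2 0 1 (by simp)
    refine ⟨⟨_, hmem⟩, ?_⟩
    show !![(0:ℂ), 1; -1, 0] * M.val * star !![(0:ℂ), 1; -1, 0] = _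
    have key : !![(0:ℂ), 1; -1, 0] * M.val = !![lam, 0; 0, mu] * !![(0:ℂ), 1; -1, 0] := by
      rw [hM]
      ext i j
      fin_cases i <;> fin_cases j <;>
        simp [Matrix.mul_apply, Fin.sum_univ_two, hb0, hamu, hconjmu]
    rw [key, mul_assoc, su2_mul_star ⟨_, hmem⟩, mul_one]
  · obtain ⟨r, hr⟩ : ∃ t : ℝ, t = Real.sqrt (normSq x + normSq b) := ⟨_, rfl⟩
    have hnn : (0:ℝ) ≤ normSq x + normSq b :=
      add_nonneg (Complex.normSq_nonneg x) (Complex.normSq_nonneg b)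
    have hrpos : 0 < r := hr ▸ Real.sqrt_pos.mpr (lt_of_le_of_ne hnn (Ne.symm hdeg))
    have hr2 : r ^ 2 = normSq x + normSq b := by rw [hr]; exact Real.sq_sqrt hnn
    have hrne : (r : ℂ) ≠ 0 := by exact_mod_cast hrpos.ne'
    have hn1 : normSq (x / r) + normSq (b / r) = 1 := by
      simp only [div_eq_mul_inv, Complex.normSq_mul, Complex.normSq_inv,
        Complex.normSq_ofReal]
      have h9 : normSq x * (r * r)⁻¹ + normSq b * (r * r)⁻¹
          = (normSq x + normSq b) / (r * r) := by ring
      rw [h9, ← hr2]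
      field_simp
    have hmem := mk_mem_su2 (x / r) (b / r) hn1
    have hcx : (starRingEnd ℂ) (x / r) = (mu - a) / r := by
      rw [map_div₀, hx, map_sub, hconjlam, Complex.conj_conj, Complex.conj_ofReal]
    have hcb : (starRingEnd ℂ) (b / r) = (starRingEnd ℂ) b / r := by
      rw [map_div₀, Complex.conj_ofReal]
    refine ⟨⟨_, hmem⟩, ?_⟩
    show !![x / r, b / r; -(starRingEnd ℂ) (b / r), (starRingEnd ℂ) (x / r)] * M.val
        * star !![x / r, b / r; -(starRingEnd ℂ) (b / r), (starRingEnd ℂ) (x / r)] = _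
    have hgval : !![x / r, b / r; -(starRingEnd ℂ) (b / r), (starRingEnd ℂ) (x / r)]
        = ((r : ℂ))⁻¹ • !![x, b; -(starRingEnd ℂ) b, mu - a] := by
      rw [hcx, hcb]
      ext i j
      fin_cases i <;> fin_cases j <;>
        simp [Matrix.smul_apply, div_eq_inv_mul, neg_div, smul_eq_mul]
    have key0 : !![x, b; -(starRingEnd ℂ) b, mu - a] * M.val
        = !![lam, 0; 0, mu] * !![x, b; -(starRingEnd ℂ) b, mu - a] := by
      rw [hM]
      ext i j
      fin_cases i <;> fin_cases j <;>
        simp [Matrix.mul_apply, Fin.sum_univ_two]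
      · linear_combination (a - lam) * hx + (-1 : ℂ) * hnc + lam * hca + hlm
      · linear_combination b * hx
      · ring
      · linear_combination (-1 : ℂ) * hnc + mu * hca + hlm
    have key : !![x / r, b / r; -(starRingEnd ℂ) (b / r), (starRingEnd ℂ) (x / r)] * M.val
        = !![lam, 0; 0, mu]
          * !![x / r, b / r; -(starRingEnd ℂ) (b / r), (starRingEnd ℂ) (x / r)] := by
      rw [hgval, smul_mul_assoc, key0, mul_smul_comm]
    rw [key, mul_assoc, su2_mul_star ⟨_, hmem⟩, mul_one]

lemma su2_decomp (M : SU2) : ∃ a b : ℂ,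
    M.val = !![a, b; -(starRingEnd ℂ) b, (starRingEnd ℂ) a] ∧
    normSq a + normSq b = 1 ∧ (M.val.trace).re = 2 * a.re := by
  refine ⟨M.val 0 0, M.val 0 1, ?_, su2_normSq M, by rw [su2_trace]; simp⟩
  ext i j
  fin_cases i <;> fin_cases j <;> simp [su2_e10, su2_e11]

lemma su2_traceRe_bound (M : SU2) : |(M.val.trace).re / 2| ≤ 1 := by
  obtain ⟨a, b, hM, hn, ht⟩ := su2_decomp M
  rw [ht, abs_le]
  constructor <;> nlinarith [Complex.normSq_apply a, sq_nonneg a.im, Complex.normSq_nonneg b]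

lemma traceRe_eq_of_ang_eq {M N : SU2} (h : ang M = ang N) :
    (M.val.trace).re = (N.val.trace).re := by
  have hM := abs_le.mp (su2_traceRe_bound M)
  have hN := abs_le.mp (su2_traceRe_bound N)
  have h1 : Real.cos (ang M) = (M.val.trace).re / 2 :=
    Real.cos_arccos hM.1 hM.2
  have h2 : Real.cos (ang N) = (N.val.trace).re / 2 :=
    Real.cos_arccos hN.1 hN.2
  rw [h, h2] at h1
  linarith

lemma trace_conj (g M : SU2) : ((g * M * g⁻¹).val).trace = M.val.trace := by
  show (g.val * M.val * (g⁻¹).val).trace = _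
  rw [su2_inv_val, Matrix.trace_mul_cycle, su2_star_mul, one_mul]

lemma ang_conj (g M : SU2) : ang (g * M * g⁻¹) = ang M := by
  unfold ang; rw [trace_conj]

lemma match_pair (c s : ℝ) (D B₁ B₂ : SU2)
    (hD : D.val = !![(c:ℂ) + s * Complex.I, 0; 0, (c:ℂ) - s * Complex.I])
    (h1 : (B₁.val.trace).re = (B₂.val.trace).re)
    (h2 : (((D * B₁).val).trace).re = (((D * B₂).val).trace).re) :
    ∃ h : SU2, h * D * h⁻¹ = D ∧ h * B₁ * h⁻¹ = B₂ := by
  obtain ⟨p, q, hB1, hn1, ht1⟩ := su2_decomp B₁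
  obtain ⟨p', q', hB2, hn2, ht2⟩ := su2_decomp B₂
  have hpre : p.re = p'.re := by rw [ht1, ht2] at h1; linarith
  have htD1 : (((D * B₁).val).trace).re = 2 * (c * p.re - s * p.im) := by
    show ((D.val * B₁.val).trace).re = _
    rw [hD, hB1, Matrix.trace_fin_two]
    simp [Matrix.mul_apply, Fin.sum_univ_two]
    ring
  have htD2 : (((D * B₂).val).trace).re = 2 * (c * p'.re - s * p'.im) := by
    show ((D.val * B₂.val).trace).re = _
    rw [hD, hB2, Matrix.trace_fin_two]
    simp [Matrix.mul_apply, Fin.sum_univ_two]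
    ring
  by_cases hs0 : s = 0
  · -- D is scalar
    have hDsc : D.val = (c : ℂ) • (1 : Matrix (Fin 2) (Fin 2) ℂ) := by
      rw [hD, hs0]
      ext i j
      fin_cases i <;> fin_cases j <;> simp [Matrix.one_apply]
    have hcomm : ∀ h : SU2, h * D * h⁻¹ = D := by
      intro h
      apply Subtype.ext
      show h.val * D.val * (h⁻¹).val = D.val
      rw [su2_inv_val, hDsc, mul_smul_comm, mul_one, smul_mul_assoc, su2_mul_star]
    obtain ⟨k₁, hk₁⟩ := conj_to_diag B₁ ((B₁.val.trace).re / 2)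
      (Real.sqrt (1 - ((B₁.val.trace).re / 2) ^ 2)) rfl rfl
    obtain ⟨k₂, hk₂⟩ := conj_to_diag B₂ ((B₁.val.trace).re / 2)
      (Real.sqrt (1 - ((B₁.val.trace).re / 2) ^ 2)) (by rw [h1]) rfl
    refine ⟨k₂⁻¹ * k₁, hcomm _, ?_⟩
    have e1 : k₁ * B₁ * k₁⁻¹ = k₂ * B₂ * k₂⁻¹ := Subtype.ext (hk₁.trans hk₂.symm)
    rw [_root_.mul_inv_rev, inv_inv,
      show k₂⁻¹ * k₁ * B₁ * (k₁⁻¹ * k₂) = k₂⁻¹ * (k₁ * B₁ * k₁⁻¹) * k₂ by group, e1]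
    group
  · -- s ≠ 0
    have hpim : p.im = p'.im := by
      rw [htD1, htD2, hpre] at h2
      exact mul_left_cancel₀ hs0 (by linarith)
    have hpp : p = p' := Complex.ext hpre hpim
    have hnq : normSq q = normSq q' := by
      have e1 : normSq p = normSq p' := by
        rw [Complex.normSq_apply, Complex.normSq_apply, hpre, hpim]
      linarith
    by_cases hq : q = 0
    · have hq' : q' = 0 := by
        rw [← Complex.normSq_eq_zero, ← hnq, Complex.normSq_eq_zero]; exact hq
      have : B₁ = B₂ := Subtype.ext (by rw [hB1, hB2, hpp, hq, hq'])
      exact ⟨1, by group, by rw [this]; group⟩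
    · have hq' : q' ≠ 0 := by
        intro h0
        apply hq
        have : normSq q' = 0 := by rw [h0]; simp
        rw [← Complex.normSq_eq_zero, hnq]
        exact this
      obtain ⟨e, he⟩ : ∃ e : ℂ, e ^ 2 = q' / q :=
        ⟨(q' / q) ^ ((2 : ℂ))⁻¹, by
          have := Complex.cpow_nat_inv_pow (q' / q) (n := 2) (by norm_num)
          simpa using this⟩
      have hne1 : normSq e = 1 := by
        have h3 : normSq e ^ 2 = 1 := by
          have e2 : normSq (e ^ 2) = normSq e ^ 2 := by
            rw [pow_two, pow_two, Complex.normSq_mul]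
          rw [← e2, he, Complex.normSq_div, hnq,
            div_self (by simpa [Complex.normSq_eq_zero] using hq')]
        nlinarith [Complex.normSq_nonneg e]
      have hee : e * (starRingEnd ℂ) e = 1 := by
        rw [Complex.mul_conj]; exact_mod_cast hne1
      have hmem : !![e, 0; 0, (starRingEnd ℂ) e] ∈ SU2 := by
        simpa using mk_mem_su2 e 0 (by simp [hne1])
      have hq2 : q' = e ^ 2 * q := by
        rw [he]
        field_simp
      refine ⟨⟨_, hmem⟩, ?_, ?_⟩
      · apply Subtype.ext
        show !![e, 0; 0, (starRingEnd ℂ) e] * D.val * star !![e, 0; 0, (starRingEnd ℂ) e] = D.val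
        rw [hD]
        ext i j
        fin_cases i <;> fin_cases j <;>
          simp [Matrix.mul_apply, Fin.sum_univ_two, Matrix.star_eq_conjTranspose,
            Matrix.conjTranspose_apply]
        · linear_combination ((c:ℂ) + s * Complex.I) * hee
        · linear_combination ((c:ℂ) - s * Complex.I) * (starRingEnd ℂ) e * 0 + ((c:ℂ) - s * Complex.I) * hee
      · apply Subtype.ext
        show !![e, 0; 0, (starRingEnd ℂ) e] * B₁.val * star !![e, 0; 0, (starRingEnd ℂ) e] = B₂.val
        rw [hB1, hB2, ← hpp, hq2]
        ext i j
        fin_cases i <;> fin_cases j <;>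
          simp [Matrix.mul_apply, Fin.sum_univ_two, Matrix.star_eq_conjTranspose,
            Matrix.conjTranspose_apply]
        · linear_combination p * hee
        · ring
        · ring
        · linear_combination (starRingEnd ℂ) p * hee


/-- Two pairs of elements of SU(2) with the same three angles are simultaneously
conjugate. -/
theorem stmt4 (A B A' B' : SU2)
    (h1 : ang A = ang A') (h2 : ang B = ang B') (h3 : ang (A * B) = ang (A' * B')) :
    ∃ g : SU2, A' = g * A * g⁻¹ ∧ B' = g * B * g⁻¹ := by
  obtain ⟨g₁, hg₁⟩ := conj_to_diag A ((A.val.trace).re / 2)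
    (Real.sqrt (1 - ((A.val.trace).re / 2) ^ 2)) rfl rfl
  obtain ⟨g₂, hg₂⟩ := conj_to_diag A' ((A.val.trace).re / 2)
    (Real.sqrt (1 - ((A.val.trace).re / 2) ^ 2))
    (by rw [traceRe_eq_of_ang_eq h1]) rfl
  have hDeq : g₂ * A' * g₂⁻¹ = g₁ * A * g₁⁻¹ := Subtype.ext (hg₂.trans hg₁.symm)
  have hb1 : ((g₁ * B * g₁⁻¹).val.trace).re = ((g₂ * B' * g₂⁻¹).val.trace).re := by
    rw [trace_conj, trace_conj]
    exact traceRe_eq_of_ang_eq h2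
  have hb2 : (((g₁ * A * g₁⁻¹) * (g₁ * B * g₁⁻¹)).val.trace).re
      = (((g₁ * A * g₁⁻¹) * (g₂ * B' * g₂⁻¹)).val.trace).re := by
    have e1 : (g₁ * A * g₁⁻¹) * (g₁ * B * g₁⁻¹) = g₁ * (A * B) * g₁⁻¹ := by group
    have e2 : (g₁ * A * g₁⁻¹) * (g₂ * B' * g₂⁻¹) = g₂ * (A' * B') * g₂⁻¹ := by
      rw [← hDeq]; group
    rw [e1, e2, trace_conj, trace_conj]
    exact traceRe_eq_of_ang_eq h3
  obtain ⟨h, hhD, hhB⟩ := match_pair ((A.val.trace).re / 2)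
    (Real.sqrt (1 - ((A.val.trace).re / 2) ^ 2))
    (g₁ * A * g₁⁻¹) (g₁ * B * g₁⁻¹) (g₂ * B' * g₂⁻¹) hg₁ hb1 hb2
  refine ⟨g₂⁻¹ * h * g₁, ?_, ?_⟩
  · rw [show g₂⁻¹ * h * g₁ * A * (g₂⁻¹ * h * g₁)⁻¹
        = g₂⁻¹ * (h * (g₁ * A * g₁⁻¹) * h⁻¹) * g₂ by group, hhD, ← hDeq]
    group
  · rw [show g₂⁻¹ * h * g₁ * B * (g₂⁻¹ * h * g₁)⁻¹
        = g₂⁻¹ * (h * (g₁ * B * g₁⁻¹) * h⁻¹) * g₂ by group, hhB]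
    group

end
end

section
/- Let A, B ∈ SU(2) be two matrices that do not commute. If ξ is a 2×2 complex matrix with ξᴴ = −ξ and Tr(ξ) = 0 (i.e. ξ ∈ su(2)) satisfying A·ξ·A⁻¹ = ξ and B·ξ·B⁻¹ = ξ, then ξ = 0. -/
open Matrix

noncomputable section

/-- If two vectors are both "parallel" to a nonzero vector `(b, c, a2)` (in the sense of
vanishing cross products), then they are parallel to each other. -/
lemma cross_trans (b c a2 q r u q' r' u' : ℂ) (h0 : ¬(b = 0 ∧ c = 0 ∧ a2 = 0))
    (h1 : q * c = b * r) (h2 : b * u = a2 * q) (h3 : a2 * r = c * u)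
    (h1' : q' * c = b * r') (h2' : b * u' = a2 * q') (h3' : a2 * r' = c * u') :
    q * r' = r * q' ∧ q' * u = q * u' ∧ r * u' = r' * u := by
  rcases not_and_or.1 h0 with hb | h0'
  · have er : r = q * c / b := by field_simp; linear_combination -h1
    have er' : r' = q' * c / b := by field_simp; linear_combination -h1'
    have eu : u = a2 * q / b := by field_simp; linear_combination h2
    have eu' : u' = a2 * q' / b := by field_simp; linear_combination h2'
    refine ⟨?_, ?_, ?_⟩ <;> simp only [er, er', eu, eu'] <;> ring
  rcases not_and_or.1 h0' with hc | ha
  · have eq : q = b * r / c := by field_simp; linear_combination h1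
    have eq' : q' = b * r' / c := by field_simp; linear_combination h1'
    have eu : u = a2 * r / c := by field_simp; linear_combination -h3
    have eu' : u' = a2 * r' / c := by field_simp; linear_combination -h3'
    refine ⟨?_, ?_, ?_⟩ <;> simp only [eq, eq', eu, eu'] <;> ring
  · have eq : q = b * u / a2 := by field_simp; linear_combination -h2
    have eq' : q' = b * u' / a2 := by field_simp; linear_combination -h2'
    have er : r = c * u / a2 := by field_simp; linear_combination h3
    have er' : r' = c * u' / a2 := by field_simp; linear_combination h3'
    refine ⟨?_, ?_, ?_⟩ <;> simp only [eq, eq', er, er'] <;> ring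

/-- A matrix commuting with a nonzero traceless 2×2 matrix satisfies the three
"parallelism" scalar relations. -/
lemma comm_rel (ξ M : Matrix (Fin 2) (Fin 2) ℂ) (h11 : ξ 1 1 = -ξ 0 0)
    (hM : M * ξ = ξ * M) :
    M 0 1 * ξ 1 0 = ξ 0 1 * M 1 0 ∧
    ξ 0 1 * (M 0 0 - M 1 1) = (2 * ξ 0 0) * M 0 1 ∧
    (2 * ξ 0 0) * M 1 0 = ξ 1 0 * (M 0 0 - M 1 1) := by
  have e00 : (M * ξ) 0 0 = (ξ * M) 0 0 := by rw [hM]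
  have e01 : (M * ξ) 0 1 = (ξ * M) 0 1 := by rw [hM]
  have e10 : (M * ξ) 1 0 = (ξ * M) 1 0 := by rw [hM]
  simp only [Matrix.mul_apply, Fin.sum_univ_two] at e00 e01 e10
  refine ⟨by linear_combination e00, by linear_combination e01 - M 0 1 * h11,
    by linear_combination e10 + M 1 0 * h11⟩

/-- If A, B ∈ SU(2) do not commute, the only element of su(2) fixed by both adjoint
actions is 0. -/
theorem stmt8 (A B : SU2) (h : A * B ≠ B * A) (ξ : Matrix (Fin 2) (Fin 2) ℂ)
    (hskew : ξᴴ = -ξ) (htr : ξ.trace = 0)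
    (hA : A.val * ξ * (A⁻¹ : SU2).val = ξ) (hB : B.val * ξ * (B⁻¹ : SU2).val = ξ) :
    ξ = 0 := by
  by_contra hξ
  have h11 : ξ 1 1 = -ξ 0 0 := by
    have h' := htr
    rw [Matrix.trace_fin_two] at h'
    linear_combination h'
  -- ξ commutes with A.val and B.val
  have hAi : (A⁻¹ : SU2).val * A.val = 1 := by
    have := congrArg Subtype.val (inv_mul_cancel A)
    exact this
  have hBi : (B⁻¹ : SU2).val * B.val = 1 := by
    have := congrArg Subtype.val (inv_mul_cancel B)
    exact this
  have hA' : A.val * ξ = ξ * A.val := by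
    have := congrArg (· * A.val) hA
    simpa [mul_assoc, hAi] using this
  have hB' : B.val * ξ = ξ * B.val := by
    have := congrArg (· * B.val) hB
    simpa [mul_assoc, hBi] using this
  -- ξ has a nonzero entry datum
  have hne : ¬(ξ 0 1 = 0 ∧ ξ 1 0 = 0 ∧ 2 * ξ 0 0 = 0) := by
    rintro ⟨hb, hc, ha⟩
    have ha0 : ξ 0 0 = 0 := by
      have h2 : (2 : ℂ) ≠ 0 := two_ne_zero
      exact (mul_eq_zero.mp ha).resolve_left h2
    apply hξ
    ext i j
    fin_cases i <;> fin_cases j <;>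
      simp [ha0, hb, hc, h11]
  obtain ⟨hA1, hA2, hA3⟩ := comm_rel ξ A.val h11 hA'
  obtain ⟨hB1, hB2, hB3⟩ := comm_rel ξ B.val h11 hB'
  obtain ⟨c1, c2, c3⟩ := cross_trans (ξ 0 1) (ξ 1 0) (2 * ξ 0 0)
    (A.val 0 1) (A.val 1 0) (A.val 0 0 - A.val 1 1)
    (B.val 0 1) (B.val 1 0) (B.val 0 0 - B.val 1 1)
    hne hA1 hA2 hA3 hB1 hB2 hB3
  have hAB : A.val * B.val = B.val * A.val := by
    ext i j
    fin_cases i <;> fin_cases j <;>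
      simp only [Matrix.mul_apply, Fin.sum_univ_two, Fin.zero_eta, Fin.mk_one, Fin.isValue]
    · linear_combination c1
    · linear_combination c2
    · linear_combination c3
    · linear_combination -c1
  exact h (Subtype.ext hAB)

end
end

section
/- Let Γ be a group and ρ, ρ' : Γ → SU(2) two homomorphisms whose images lie in the diagonal torus T. Then there exists g ∈ SU(2) with ρ'(γ) = g·ρ(γ)·g⁻¹ for all γ ∈ Γ if and only if either ρ' = ρ, or ρ'(γ) = ρ(γ)⁻¹ for all γ ∈ Γ. -/
open Matrix

noncomputable section

/-- The diagonal torus of SU(2): matrices `diag(z, z̄)` with `|z| = 1`. -/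
def diagTorus : Set (Matrix (Fin 2) (Fin 2) ℂ) :=
  {M | ∃ z : ℂ, ‖z‖ = 1 ∧ M = !![z, 0; 0, starRingEnd ℂ z]}

lemma su2_inv_val_s11 (A : SU2) : (A⁻¹).val = star A.val := rfl

/-- Two representations with values in the diagonal torus are conjugate iff they are
equal or inverse of each other. -/
theorem stmt11 {Γ : Type*} [Group Γ] (ρ ρ' : Γ →* SU2)
    (hρ : ∀ γ : Γ, ((ρ γ : SU2) : Matrix (Fin 2) (Fin 2) ℂ) ∈ diagTorus)
    (hρ' : ∀ γ : Γ, ((ρ' γ : SU2) : Matrix (Fin 2) (Fin 2) ℂ) ∈ diagTorus) :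
    (∃ g : SU2, ∀ γ : Γ, ρ' γ = g * ρ γ * g⁻¹) ↔
      (ρ' = ρ ∨ ∀ γ : Γ, ρ' γ = (ρ γ)⁻¹) := by
  simp only [diagTorus, Set.mem_setOf_eq] at hρ hρ'
  choose z hz1 hz2 using hρ
  choose w hw1 hw2 using hρ'
  constructor
  · rintro ⟨g, h⟩
    have h' : ∀ γ, ρ' γ * g = g * ρ γ := fun γ => by
      rw [h γ, mul_assoc, mul_assoc, inv_mul_cancel, mul_one]
    have hm : ∀ γ, (ρ' γ).val * g.val = g.val * (ρ γ).val := fun γ =>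
      congrArg Subtype.val (h' γ)
    by_cases hc : ∃ γ0, starRingEnd ℂ (z γ0) ≠ z γ0
    · obtain ⟨γ0, hne⟩ := hc
      have E := hm γ0
      rw [hz2 γ0, hw2 γ0] at E
      have E00 := congrFun (congrFun E 0) 0
      have E01 := congrFun (congrFun E 0) 1
      have E10 := congrFun (congrFun E 1) 0
      have E11 := congrFun (congrFun E 1) 1
      simp [Matrix.mul_apply, Fin.sum_univ_two] at E00 E01 E10 E11
      by_cases hba : w γ0 = z γ0
      · -- g is diagonal, ρ' = ρ
        rw [hba] at E01 E10
        have hg01 : g.val 0 1 = 0 := by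
          have h2 : g.val 0 1 * (z γ0 - starRingEnd ℂ (z γ0)) = 0 := by
            linear_combination E01
          rcases mul_eq_zero.mp h2 with h | h
          · exact h
          · exact absurd (by linear_combination -h) hne
        have hg10 : g.val 1 0 = 0 := by
          have h2 : g.val 1 0 * (z γ0 - starRingEnd ℂ (z γ0)) = 0 := by
            linear_combination -E10
          rcases mul_eq_zero.mp h2 with h | h
          · exact h
          · exact absurd (by linear_combination -h) hne
        left
        ext γ : 1
        have hcomm : g * ρ γ = ρ γ * g := by
          apply Subtype.ext
          show g.val * (ρ γ).val = (ρ γ).val * g.val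
          rw [hz2 γ]
          ext i j
          fin_cases i <;> fin_cases j <;>
            simp [Matrix.mul_apply, Fin.sum_univ_two, hg01, hg10] <;> ring
        exact mul_right_cancel ((h' γ).trans hcomm)
      · -- w γ0 ≠ z γ0
        have hg00 : g.val 0 0 = 0 := by
          have h2 : g.val 0 0 * (w γ0 - z γ0) = 0 := by linear_combination E00
          rcases mul_eq_zero.mp h2 with h | h
          · exact h
          · exact absurd (by linear_combination h) hba
        have hbab : w γ0 = starRingEnd ℂ (z γ0) := by
          by_contra hbc
          have hg01 : g.val 0 1 = 0 := by
            have h2 : g.val 0 1 * (w γ0 - starRingEnd ℂ (z γ0)) = 0 := by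
              linear_combination E01
            rcases mul_eq_zero.mp h2 with h | h
            · exact h
            · exact absurd (by linear_combination h) hbc
          have hdet : g.val.det = 1 := (Matrix.mem_specialUnitaryGroup_iff.mp g.2).2
          rw [Matrix.det_fin_two, hg00, hg01] at hdet
          simp at hdet
        -- g is antidiagonal: ρ' γ = (ρ γ)⁻¹
        have hg11 : g.val 1 1 = 0 := by
          rw [hbab] at E11
          simp only [Complex.conj_conj] at E11
          have h2 : g.val 1 1 * (z γ0 - starRingEnd ℂ (z γ0)) = 0 := by
            linear_combination E11
          rcases mul_eq_zero.mp h2 with h | h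
          · exact h
          · exact absurd (by linear_combination -h) hne
        right
        intro γ
        have hanti : g * ρ γ = (ρ γ)⁻¹ * g := by
          apply Subtype.ext
          show g.val * (ρ γ).val = star (ρ γ).val * g.val
          rw [hz2 γ]
          ext i j
          fin_cases i <;> fin_cases j <;>
            simp [Matrix.mul_apply, Fin.sum_univ_two, Matrix.star_apply, hg00, hg11] <;> ring
        calc ρ' γ = g * ρ γ * g⁻¹ := h γ
          _ = (ρ γ)⁻¹ * g * g⁻¹ := by rw [hanti]
          _ = (ρ γ)⁻¹ := by group
    · -- all ρ γ central
      push_neg at hc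
      left
      ext γ : 1
      have hcomm : g * ρ γ = ρ γ * g := by
        apply Subtype.ext
        show g.val * (ρ γ).val = (ρ γ).val * g.val
        rw [hz2 γ]
        ext i j
        fin_cases i <;> fin_cases j <;>
          simp [Matrix.mul_apply, Fin.sum_univ_two, hc γ] <;> ring
      exact mul_right_cancel ((h' γ).trans hcomm)
  · rintro (rfl | hinv)
    · exact ⟨1, fun γ => by group⟩
    · have hWmem : (!![0, 1; -1, 0] : Matrix (Fin 2) (Fin 2) ℂ) ∈ SU2 := by
        rw [Matrix.mem_specialUnitaryGroup_iff]
        constructor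
        · rw [Matrix.mem_unitaryGroup_iff]
          ext i j
          fin_cases i <;> fin_cases j <;>
            simp [Matrix.mul_apply, Fin.sum_univ_two, Matrix.star_apply, Matrix.one_apply]
        · simp [Matrix.det_fin_two]
      refine ⟨⟨_, hWmem⟩, fun γ => ?_⟩
      rw [eq_mul_inv_iff_mul_eq]
      apply Subtype.ext
      show (ρ' γ).val * _ = _ * (ρ γ).val
      have hval : (ρ' γ).val = star (ρ γ).val := congrArg Subtype.val (hinv γ)
      rw [hval, hz2 γ]
      ext i j
      fin_cases i <;> fin_cases j <;>
        simp [Matrix.mul_apply, Fin.sum_univ_two, Matrix.star_apply]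

end
end

section
/- Let a, b be coprime positive integers and let G_{a,b} = ⟨u, v | u^a = v^b⟩ be the torus knot group. Let ρ : G_{a,b} → SU(2) be an irreducible homomorphism (its image is nonabelian). Then ρ(u)^a = ρ(v)^b is central, i.e. equals 1 or −1, and there exist integers k, l with 0 < k < a, 0 < l < b, k ≡ l (mod 2), such that ang(ρ(u)) = kπ/a and ang(ρ(v)) = lπ/b. -/
open Matrix

noncomputable section

lemma su2_entries_s13 (M : Matrix (Fin 2) (Fin 2) ℂ) (hM : M ∈ SU2) :
    M 1 1 = star (M 0 0) ∧ M 1 0 = -star (M 0 1) ∧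
      M 0 0 * star (M 0 0) + M 0 1 * star (M 0 1) = 1 := by
  obtain ⟨hu, hd⟩ := Matrix.mem_specialUnitaryGroup_iff.mp hM
  have h1 : M⁻¹ = star M := Matrix.inv_eq_left_inv hu.1
  have h2 : M⁻¹ = M.adjugate := by
    rw [Matrix.inv_def, hd]; simp
  have h3 : star M = M.adjugate := h1 ▸ h2
  have h4 := Matrix.adjugate_fin_two M
  rw [← h3] at h4
  have e11 : M 1 1 = star (M 0 0) := by
    have := congrFun (congrFun h4 0) 0
    simpa [Matrix.star_eq_conjTranspose, Matrix.conjTranspose_apply] using this.symm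
  have e10 : M 1 0 = -star (M 0 1) := by
    have := congrFun (congrFun h4 0) 1
    simp [Matrix.star_eq_conjTranspose, Matrix.conjTranspose_apply] at this
    have := congrArg star this
    simp only [star_star, star_neg] at this
    simpa using this
  refine ⟨e11, e10, ?_⟩
  have hdet := Matrix.det_fin_two M
  rw [hd, e11, e10] at hdet
  linear_combination -hdet

lemma su2_commute_iff (M N : Matrix (Fin 2) (Fin 2) ℂ) (hM : M ∈ SU2) (hN : N ∈ SU2) :
    M * N = N * M ↔ (M 0 1 * star (N 0 1) = N 0 1 * star (M 0 1) ∧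
      N 0 1 * (M 0 0 - star (M 0 0)) = M 0 1 * (N 0 0 - star (N 0 0))) := by
  obtain ⟨m11, m10, -⟩ := su2_entries_s13 M hM
  obtain ⟨n11, n10, -⟩ := su2_entries_s13 N hN
  constructor
  · intro h
    have h00 := congrFun (congrFun h 0) 0
    have h01 := congrFun (congrFun h 0) 1
    simp only [Matrix.mul_apply, Fin.sum_univ_two, m11, m10, n11, n10] at h00 h01
    constructor
    · linear_combination -h00
    · linear_combination h01
  · rintro ⟨e1, e2⟩
    have e1' := congrArg star e1
    have e2' := congrArg star e2
    simp only [star_mul', star_sub, star_star] at e1' e2'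
    ext i j
    fin_cases i <;> fin_cases j <;>
      simp only [Matrix.mul_apply, Fin.sum_univ_two, m11, m10, n11, n10, Fin.isValue,
        Fin.zero_eta, Fin.mk_one]
    · linear_combination -e1
    · linear_combination e2
    · linear_combination -e2'
    · linear_combination -e1'

lemma su2_normSq_s13 (M : Matrix (Fin 2) (Fin 2) ℂ) (hM : M ∈ SU2) :
    Complex.normSq (M 0 0) + Complex.normSq (M 0 1) = 1 := by
  have h := (su2_entries_s13 M hM).2.2
  have : ((Complex.normSq (M 0 0) + Complex.normSq (M 0 1) : ℝ) : ℂ) = ((1:ℝ):ℂ) := by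
    push_cast
    rw [← Complex.mul_conj, ← Complex.mul_conj]
    simpa using h
  exact_mod_cast this

lemma su2_eq_one_of (M : Matrix (Fin 2) (Fin 2) ℂ) (hM : M ∈ SU2) (h : (M 0 0).re = 1) :
    M = 1 := by
  obtain ⟨m11, m10, -⟩ := su2_entries_s13 M hM
  have hn := su2_normSq_s13 M hM
  have h1 : Complex.normSq (M 0 0) = (M 0 0).re^2 + (M 0 0).im^2 := by
    rw [Complex.normSq_apply]; ring
  have him : (M 0 0).im = 0 ∧ Complex.normSq (M 0 1) = 0 := by
    constructor <;> nlinarith [Complex.normSq_nonneg (M 0 1), sq_nonneg ((M 0 0).im)]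
  have hb : M 0 1 = 0 := by
    simpa using Complex.normSq_eq_zero.mp him.2
  have ha : M 0 0 = 1 := Complex.ext (by simpa using h) (by simpa using him.1)
  ext i j
  fin_cases i <;> fin_cases j <;>
    simp [Matrix.one_apply, m11, m10, ha, hb]

lemma su2_eq_neg_one_of (M : Matrix (Fin 2) (Fin 2) ℂ) (hM : M ∈ SU2) (h : (M 0 0).re = -1) :
    M = -1 := by
  obtain ⟨m11, m10, -⟩ := su2_entries_s13 M hM
  have hn := su2_normSq_s13 M hM
  have h1 : Complex.normSq (M 0 0) = (M 0 0).re^2 + (M 0 0).im^2 := by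
    rw [Complex.normSq_apply]; ring
  have him : (M 0 0).im = 0 ∧ Complex.normSq (M 0 1) = 0 := by
    constructor <;> nlinarith [Complex.normSq_nonneg (M 0 1), sq_nonneg ((M 0 0).im)]
  have hb : M 0 1 = 0 := by
    simpa using Complex.normSq_eq_zero.mp him.2
  have ha : M 0 0 = -1 := Complex.ext (by simpa using h) (by simpa using him.1)
  ext i j
  fin_cases i <;> fin_cases j <;>
    simp [Matrix.one_apply, m11, m10, ha, hb]

lemma su2_centralizer (M N P : Matrix (Fin 2) (Fin 2) ℂ) (hM : M ∈ SU2) (hN : N ∈ SU2)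
    (hP : P ∈ SU2) (hM1 : M ≠ 1) (hM2 : M ≠ -1)
    (h1 : M * N = N * M) (h2 : M * P = P * M) : N * P = P * N := by
  rw [su2_commute_iff M N hM hN] at h1
  rw [su2_commute_iff M P hM hP] at h2
  rw [su2_commute_iff N P hN hP]
  by_cases hβ : M 0 1 = 0
  · have hα : M 0 0 - star (M 0 0) ≠ 0 := by
      intro hcon
      have him : (M 0 0).im = 0 := by
        have := Complex.conj_eq_iff_im.mp (sub_eq_zero.mp hcon).symm
        exact this
      have hn := su2_normSq_s13 M hM
      have hb0 : Complex.normSq (M 0 1) = 0 := by simp [hβ]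
      rw [hb0, add_zero] at hn
      have hre : ((M 0 0).re - 1) * ((M 0 0).re + 1) = 0 := by
        have h' := Complex.normSq_apply (M 0 0)
        nlinarith [hn]
      rcases mul_eq_zero.mp hre with h | h
      · exact hM1 (su2_eq_one_of M hM (by linarith))
      · exact hM2 (su2_eq_neg_one_of M hM (by linarith))
    have hδN : N 0 1 = 0 := by
      have := h1.2
      rw [hβ, zero_mul] at this
      exact (mul_eq_zero.mp this).resolve_right hα
    have hδP : P 0 1 = 0 := by
      have := h2.2
      rw [hβ, zero_mul] at this
      exact (mul_eq_zero.mp this).resolve_right hα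
    simp [hδN, hδP]
  · constructor
    · have hββ : M 0 1 * star (M 0 1) ≠ 0 := mul_ne_zero hβ (star_ne_zero.mpr hβ)
      apply mul_left_cancel₀ hββ
      linear_combination star (M 0 1) * N 0 1 * h2.1 - star (M 0 1) * P 0 1 * h1.1
    · apply mul_left_cancel₀ hβ
      linear_combination N 0 1 * h2.2 - P 0 1 * h1.2


lemma su2_sq (M : Matrix (Fin 2) (Fin 2) ℂ) (hM : M ∈ SU2) :
    M * M = ((2 * (M 0 0).re : ℝ) : ℂ) • M - 1 := by
  obtain ⟨m11, m10, hd⟩ := su2_entries_s13 M hM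
  have hd' : M 0 0 * (starRingEnd ℂ) (M 0 0) + M 0 1 * (starRingEnd ℂ) (M 0 1) = 1 := hd
  have h2re : ((2 * (M 0 0).re : ℝ) : ℂ) = M 0 0 + (starRingEnd ℂ) (M 0 0) := by
    rw [Complex.add_conj]
  rw [← Matrix.ext_iff]
  simp only [Fin.forall_fin_two, Matrix.mul_apply, Fin.sum_univ_two, Matrix.sub_apply,
    Matrix.smul_apply, Matrix.one_apply, smul_eq_mul, m11, m10, h2re, Complex.star_def]
  norm_num
  refine ⟨⟨by linear_combination -hd', by ring⟩, by ring, by linear_combination -hd'⟩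

lemma su2_abs_re_le (M : Matrix (Fin 2) (Fin 2) ℂ) (hM : M ∈ SU2) :
    -1 ≤ (M 0 0).re ∧ (M 0 0).re ≤ 1 := by
  have hn := su2_normSq_s13 M hM
  have h' := Complex.normSq_apply (M 0 0)
  constructor <;> nlinarith [Complex.normSq_nonneg (M 0 1), sq_nonneg ((M 0 0).im),
    sq_nonneg ((M 0 0).re + 1), sq_nonneg ((M 0 0).re - 1)]

lemma ang_eq (M : SU2) : ang M = Real.arccos ((M.val 0 0).re) := by
  have h := (su2_entries_s13 M.val M.2).1
  unfold ang
  rw [Matrix.trace_fin_two, h, show star (M.val 0 0) = (starRingEnd ℂ) (M.val 0 0) from rfl,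
    Complex.add_conj]
  norm_num

lemma cos_ang (M : SU2) : Real.cos (ang M) = (M.val 0 0).re := by
  rw [ang_eq]
  exact Real.cos_arccos (su2_abs_re_le M.val M.2).1 (su2_abs_re_le M.val M.2).2

lemma su2_coe_pow (M : SU2) (n : ℕ) : ((M ^ n : SU2) : Matrix (Fin 2) (Fin 2) ℂ) = M.val ^ n := by
  induction n with
  | zero => rfl
  | succ n ih => rw [pow_succ, pow_succ, ← ih]; rfl

lemma su2_trace_pow (M : SU2) (n : ℕ) :
    ((M ^ n : SU2) : Matrix (Fin 2) (Fin 2) ℂ).trace = ((2 * Real.cos (n * ang M) : ℝ) : ℂ) := by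
  have key : ∀ m : ℕ, (M.val ^ m).trace = ((2 * Real.cos (m * ang M) : ℝ) : ℂ) ∧
      (M.val ^ (m+1)).trace = ((2 * Real.cos ((m+1 : ℕ) * ang M) : ℝ) : ℂ) := by
    intro m
    induction m with
    | zero =>
      constructor
      · norm_num [Matrix.trace_one]
      · rw [pow_one, Matrix.trace_fin_two, (su2_entries_s13 M.val M.2).1,
          show star (M.val 0 0) = (starRingEnd ℂ) (M.val 0 0) from rfl, Complex.add_conj,
          ← cos_ang M]
        push_cast
        ring_nf
    | succ m ih =>
      refine ⟨ih.2, ?_⟩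
      have hsq := su2_sq M.val M.2
      have hstep : M.val ^ (m+1+1) = M.val ^ m * (M.val * M.val) := by
        rw [pow_succ, pow_succ, mul_assoc]
      rw [hstep, hsq, mul_sub, mul_one, Matrix.trace_sub, Matrix.mul_smul, Matrix.trace_smul,
        ← pow_succ, ih.1, ih.2]
      have hc : Real.cos (((m:ℝ)+1+1) * ang M) + Real.cos ((m:ℝ) * ang M)
          = (2 * (M.val 0 0).re) * Real.cos (((m:ℝ)+1) * ang M) := by
        have e1 : ((m:ℝ)+1+1) * ang M = ((m:ℝ)+1) * ang M + ang M := by ring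
        have e2 : (m:ℝ) * ang M = ((m:ℝ)+1) * ang M - ang M := by ring
        rw [e1, e2, Real.cos_add, Real.cos_sub, ← cos_ang M]
        ring
      have hC := congrArg (fun x : ℝ => (x : ℂ)) hc
      simp only [smul_eq_mul]
      push_cast at hC ⊢
      linear_combination (-2 : ℂ) * hC
  rw [su2_coe_pow]
  exact (key n).1

lemma angle_key (M : SU2) (n : ℕ) (hn : 0 < n) (ε : ℝ) (hε : ε = 1 ∨ ε = -1)
    (htr : Real.cos (n * ang M) = ε) (hM1 : M.val ≠ 1) (hM2 : M.val ≠ -1) :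
    ∃ k : ℤ, 0 < k ∧ k < (n:ℤ) ∧ ((ε = 1 ∧ k % 2 = 0) ∨ (ε = -1 ∧ k % 2 = 1)) ∧
      ang M = k * Real.pi / n := by
  have hπ := Real.pi_pos
  have hang0 : 0 ≤ ang M := Real.arccos_nonneg _
  have hangπ : ang M ≤ Real.pi := Real.arccos_le_pi _
  have hnR : (0:ℝ) < n := by exact_mod_cast hn
  have hsin : Real.sin (n * ang M) = 0 := by
    have h := Real.sin_sq_add_cos_sq ((n:ℝ) * ang M)
    have h2 : Real.sin ((n:ℝ) * ang M)^2 = 0 := by rcases hε with rfl | rfl <;> nlinarith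
    exact pow_eq_zero_iff (two_ne_zero) |>.mp h2
  obtain ⟨k, hk⟩ := Real.sin_eq_zero_iff.mp hsin
  have hMne0 : ang M ≠ 0 := by
    intro h0
    apply hM1
    apply su2_eq_one_of M.val M.2
    have h1 : 1 ≤ (M.val 0 0).re := Real.arccos_eq_zero.mp (ang_eq M ▸ h0)
    linarith [(su2_abs_re_le M.val M.2).2]
  have hMneπ : ang M ≠ Real.pi := by
    intro h0
    apply hM2
    apply su2_eq_neg_one_of M.val M.2
    have h1 : (M.val 0 0).re ≤ -1 := Real.arccos_eq_pi.mp (ang_eq M ▸ h0)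
    linarith [(su2_abs_re_le M.val M.2).1]
  have hk0 : 0 < k := by
    have h1 : (0:ℝ) < (k:ℝ) * Real.pi := by
      rw [hk]
      have h2 : 0 < ang M := lt_of_le_of_ne hang0 (Ne.symm hMne0)
      positivity
    have h3 : (0:ℝ) < (k:ℝ) := by by_contra hcon; push_neg at hcon; nlinarith
    exact_mod_cast h3
  have hkn : k < (n:ℤ) := by
    have h1 : (k:ℝ) * Real.pi < (n:ℝ) * Real.pi := by
      rw [hk]
      have h2 : ang M < Real.pi := lt_of_le_of_ne hangπ hMneπ
      nlinarith
    have h3 : (k:ℝ) < (n:ℝ) := lt_of_mul_lt_mul_right h1 (le_of_lt hπ)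
    exact_mod_cast h3
  refine ⟨k, hk0, hkn, ?_, ?_⟩
  · rw [← hk] at htr
    rcases hε with rfl | rfl
    · left
      refine ⟨rfl, ?_⟩
      obtain ⟨m, hm⟩ := (Real.cos_eq_one_iff _).mp htr
      have h2 : (2*(m:ℝ)) * Real.pi = (k:ℝ) * Real.pi := by linarith
      have h3 : (2*(m:ℝ)) = (k:ℝ) := mul_right_cancel₀ (ne_of_gt hπ) h2
      have h4 : 2*m = k := by exact_mod_cast h3
      omega
    · right
      refine ⟨rfl, ?_⟩
      have h1 : Real.cos ((k:ℝ) * Real.pi + Real.pi) = 1 := by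
        rw [Real.cos_add_pi, htr]; ring
      obtain ⟨m, hm⟩ := (Real.cos_eq_one_iff _).mp h1
      have h2 : (2*(m:ℝ)) * Real.pi = ((k:ℝ)+1) * Real.pi := by linarith
      have h3 : (2*(m:ℝ)) = ((k:ℝ)+1) := mul_right_cancel₀ (ne_of_gt hπ) h2
      have h4 : 2*m = k+1 := by exact_mod_cast h3
      omega
  · rw [eq_div_iff (ne_of_gt hnR)]
    linarith [hk]


/-- The single relator `u^a v^{-b}` of the torus knot group. -/
def torusRels (a b : ℕ) : Set (FreeGroup (Fin 2)) :=
  {FreeGroup.of 0 ^ a * (FreeGroup.of 1 ^ b)⁻¹}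

/-- The torus knot group `G_{a,b} = ⟨u, v | u^a = v^b⟩`. -/
abbrev TorusKnotGroup (a b : ℕ) := PresentedGroup (torusRels a b)

/-- The generator `u` of the torus knot group. -/
def tkU (a b : ℕ) : TorusKnotGroup a b := PresentedGroup.of 0

/-- The generator `v` of the torus knot group. -/
def tkV (a b : ℕ) : TorusKnotGroup a b := PresentedGroup.of 1

/-- For an irreducible SU(2)-representation of the torus knot group,
`ρ(u)^a = ρ(v)^b` is central, and the angles of `ρ(u)`, `ρ(v)` are of the form
`kπ/a`, `lπ/b` with `0 < k < a`, `0 < l < b` and `k ≡ l (mod 2)`. -/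
theorem stmt13 (a b : ℕ) (ha : 0 < a) (hb : 0 < b) (hab : Nat.Coprime a b)
    (ρ : TorusKnotGroup a b →* SU2)
    (hirr : ∃ γ δ : TorusKnotGroup a b, ρ γ * ρ δ ≠ ρ δ * ρ γ) :
    ρ (tkU a b) ^ a = ρ (tkV a b) ^ b ∧
    ((ρ (tkU a b) ^ a : SU2).val = 1 ∨ (ρ (tkU a b) ^ a : SU2).val = -1) ∧
    ∃ k l : ℤ, 0 < k ∧ k < (a : ℤ) ∧ 0 < l ∧ l < (b : ℤ) ∧ k % 2 = l % 2 ∧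
      ang (ρ (tkU a b)) = k * Real.pi / a ∧ ang (ρ (tkV a b)) = l * Real.pi / b := by
  set A := ρ (tkU a b) with hA
  set B := ρ (tkV a b) with hB
  -- the relation
  have hrel : A ^ a = B ^ b := by
    have h0 : FreeGroup.of 0 ^ a * ((FreeGroup.of 1 : FreeGroup (Fin 2)) ^ b)⁻¹ ∈
        Subgroup.normalClosure (torusRels a b) :=
      Subgroup.subset_normalClosure rfl
    have h1 : (tkU a b) ^ a * ((tkV a b) ^ b)⁻¹ = 1 := by
      have h2 : (tkU a b) ^ a * ((tkV a b) ^ b)⁻¹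
          = PresentedGroup.mk (torusRels a b) (FreeGroup.of 0 ^ a * (FreeGroup.of 1 ^ b)⁻¹) := by
        rw [_root_.map_mul, _root_.map_inv, _root_.map_pow, _root_.map_pow]; rfl
      rw [h2]
      exact (QuotientGroup.eq_one_iff _).mpr h0
    have h3 : (tkU a b) ^ a = (tkV a b) ^ b := by
      rwa [mul_inv_eq_one] at h1
    rw [hA, hB, ← map_pow, ← map_pow, h3]
  -- the generators do not commute
  have hAB : A * B ≠ B * A := by
    intro hc
    obtain ⟨γ, δ, hgd⟩ := hirr
    apply hgd
    have hmem : ∀ g : TorusKnotGroup a b, ρ g ∈ Subgroup.closure ({A, B} : Set SU2) := by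
      intro g
      refine PresentedGroup.generated_by (torusRels a b)
        (Subgroup.comap ρ (Subgroup.closure ({A, B} : Set SU2))) ?_ g
      intro j
      refine Subgroup.mem_comap.mpr (Subgroup.subset_closure ?_)
      fin_cases j
      · exact Set.mem_insert _ _
      · exact Set.mem_insert_of_mem _ rfl
    have hcomm : ∀ x ∈ Subgroup.closure ({A,B} : Set SU2),
        ∀ y ∈ Subgroup.closure ({A,B} : Set SU2), Commute x y := by
      intro x hx y hy
      refine Subgroup.closure_induction₂ (p := fun x y _ _ => Commute x y) ?_ ?_ ?_ ?_ ?_ ?_ ?_ hx hy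
      · intro x y hx' hy'
        simp only [Set.mem_insert_iff, Set.mem_singleton_iff] at hx' hy'
        rcases hx' with rfl | rfl <;> rcases hy' with rfl | rfl
        · exact Commute.refl _
        · exact hc
        · exact hc.symm
        · exact Commute.refl _
      · intro x _; exact Commute.one_left x
      · intro x _; exact Commute.one_right x
      · intro x y z _ _ _ h1 h2; exact h1.mul_left h2
      · intro y z x _ _ _ h1 h2; exact h1.mul_right h2
      · intro x y _ _ h; exact h.inv_left
      · intro x y _ _ h; exact h.inv_right
    exact hcomm _ (hmem γ) _ (hmem δ)
  -- A and B are not ±1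
  have hA1 : A.val ≠ 1 := by
    intro h; apply hAB; apply Subtype.ext
    show A.val * B.val = B.val * A.val
    rw [h, one_mul, mul_one]
  have hA2 : A.val ≠ -1 := by
    intro h; apply hAB; apply Subtype.ext
    show A.val * B.val = B.val * A.val
    rw [h, neg_one_mul, mul_neg_one]
  have hB1 : B.val ≠ 1 := by
    intro h; apply hAB; apply Subtype.ext
    show A.val * B.val = B.val * A.val
    rw [h, one_mul, mul_one]
  have hB2 : B.val ≠ -1 := by
    intro h; apply hAB; apply Subtype.ext
    show A.val * B.val = B.val * A.val
    rw [h, neg_one_mul, mul_neg_one]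
  -- centrality
  have hCval : (A ^ a : SU2).val = 1 ∨ (A ^ a : SU2).val = -1 := by
    by_contra hcon
    push_neg at hcon
    apply hAB
    have h1 : (A^a : SU2).val * A.val = A.val * (A^a : SU2).val :=
      congrArg Subtype.val ((Commute.refl A).pow_left a).eq
    have h2 : (A^a : SU2).val * B.val = B.val * (A^a : SU2).val := by
      rw [hrel]
      exact congrArg Subtype.val ((Commute.refl B).pow_left b).eq
    exact Subtype.ext (su2_centralizer (A^a : SU2).val A.val B.val (A^a : SU2).2 A.2 B.2
      hcon.1 hcon.2 h1 h2)
  refine ⟨hrel, hCval, ?_⟩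
  -- the common value ε of cos(a·ang A) and cos(b·ang B)
  obtain ⟨ε, hε, htrA⟩ : ∃ ε : ℝ, (ε = 1 ∨ ε = -1) ∧ Real.cos (a * ang A) = ε := by
    have htp := su2_trace_pow A a
    rcases hCval with h | h
    · refine ⟨1, Or.inl rfl, ?_⟩
      rw [h, Matrix.trace_one] at htp
      have : (2 * Real.cos (a * ang A) : ℝ) = 2 := by
        have h2 : ((2 * Real.cos (a * ang A) : ℝ) : ℂ) = ((2:ℝ) : ℂ) := by
          rw [← htp]; norm_num
        exact_mod_cast h2
      linarith
    · refine ⟨-1, Or.inr rfl, ?_⟩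
      rw [h] at htp
      have : (2 * Real.cos (a * ang A) : ℝ) = -2 := by
        have h2 : ((2 * Real.cos (a * ang A) : ℝ) : ℂ) = ((-2:ℝ) : ℂ) := by
          rw [← htp, Matrix.trace_neg, Matrix.trace_one]; norm_num
        exact_mod_cast h2
      linarith
  have htrB : Real.cos (b * ang B) = ε := by
    have htp := su2_trace_pow B b
    rw [← hrel] at htp
    rw [su2_trace_pow A a] at htp
    have h2 : (2 * Real.cos (b * ang B) : ℝ) = 2 * Real.cos (a * ang A) := by
      exact_mod_cast htp.symm
    rw [htrA] at h2
    linarith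
  obtain ⟨k, hk0, hka, hkpar, hkang⟩ := angle_key A a ha ε hε htrA hA1 hA2
  obtain ⟨l, hl0, hlb, hlpar, hlang⟩ := angle_key B b hb ε hε htrB hB1 hB2
  refine ⟨k, l, hk0, hka, hl0, hlb, ?_, hkang, hlang⟩
  rcases hkpar with ⟨he, hk2⟩ | ⟨he, hk2⟩ <;> rcases hlpar with ⟨he2, hl2⟩ | ⟨he2, hl2⟩
  · rw [hk2, hl2]
  · exfalso; rw [he] at he2; norm_num at he2
  · exfalso; rw [he] at he2; norm_num at he2
  · rw [hk2, hl2]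

end
end

section
/- For every element w of the free group on two generators there exists a polynomial F_w ∈ ℤ[x, y, z] in three variables such that for all A, B ∈ SU(2), Tr(φ_{A,B}(w)) = F_w(Tr A, Tr B, Tr(AB)), where φ_{A,B} : FreeGroup(Fin 2) → SU(2) is the group homomorphism sending the first generator to A and the second generator to B. -/
open Matrix

noncomputable section

open MvPolynomial

lemma ch2' (M : Matrix (Fin 2) (Fin 2) ℂ) :
    M * M = M.trace • M - M.det • 1 := by
  ext i j
  fin_cases i <;> fin_cases j <;>
    simp [Matrix.mul_apply, Fin.sum_univ_two, Matrix.trace, Matrix.diag,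
      Matrix.one_apply, Matrix.det_fin_two] <;> ring

lemma ch2 (M : Matrix (Fin 2) (Fin 2) ℂ) (h : M.det = 1) :
    M * M = M.trace • M - 1 := by
  rw [ch2' M, h, one_smul]

lemma pol2 (A B : Matrix (Fin 2) (Fin 2) ℂ) :
    B * A = A.trace • B + B.trace • A + ((A * B).trace - A.trace * B.trace) • 1 - A * B := by
  ext i j
  fin_cases i <;> fin_cases j <;>
    simp [Matrix.mul_apply, Fin.sum_univ_two, Matrix.trace, Matrix.diag,
      Matrix.one_apply] <;>
    ring

lemma combo_mul (A B : Matrix (Fin 2) (Fin 2) ℂ) (hA : A.det = 1) (hB : B.det = 1)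
    (p q r s p' q' r' s' : ℂ) :
    (p • 1 + q • A + r • B + s • (A*B)) * (p' • 1 + q' • A + r' • B + s' • (A*B)) =
      (p'*p + q'*(-q + r*((A*B).trace - A.trace*B.trace) - s*B.trace) + r'*(-r)
          + s'*(-(r*A.trace) - s)) • 1
      + (p'*q + q'*(p + q*A.trace + r*B.trace + s*(A*B).trace) + r'*(-s) + s'*r) • A
      + (p'*r + q'*(r*A.trace + s) + r'*(p + r*B.trace) + s'*(-q + r*(A*B).trace)) • B
      + (p'*s + q'*(-r) + r'*(q + s*B.trace) + s'*(p + q*A.trace + s*(A*B).trace)) • (A*B) := by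
  have hAA := ch2 A hA
  have hBB := ch2 B hB
  have hCC := ch2 (A*B) (by rw [Matrix.det_mul, hA, hB, mul_one])
  have hAC : A*(A*B) = A.trace • (A*B) - B := by
    rw [← mul_assoc, hAA, sub_mul, smul_mul_assoc, one_mul]
  have hCB : (A*B)*B = B.trace • (A*B) - A := by
    rw [mul_assoc, hBB, mul_sub, mul_smul_comm, mul_one]
  have hCA : (A*B)*A = (A*B).trace • A + B - B.trace • 1 := by
    rw [mul_assoc, pol2 A B, mul_sub, mul_add, mul_add, mul_smul_comm, mul_smul_comm,
      mul_smul_comm, mul_one, hAA, hAC]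
    module
  have hBC : B*(A*B) = A + (A*B).trace • B - A.trace • 1 := by
    rw [← mul_assoc, pol2 A B, sub_mul, add_mul, add_mul, smul_mul_assoc, smul_mul_assoc,
      smul_mul_assoc, one_mul, hBB, hCB]
    module
  simp only [add_mul, mul_add, smul_mul_assoc, mul_smul_comm, one_mul, mul_one, smul_smul]
  rw [hCC, hAC, hCA, hBC, hCB, pol2 A B, hAA, hBB]
  module

def tv (A B : SU2) : Fin 3 → ℂ :=
  ![(A : Matrix (Fin 2) (Fin 2) ℂ).trace, (B : Matrix (Fin 2) (Fin 2) ℂ).trace,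
    ((A : Matrix (Fin 2) (Fin 2) ℂ) * (B : Matrix (Fin 2) (Fin 2) ℂ)).trace]

def Good (w : FreeGroup (Fin 2)) (p q r s : MvPolynomial (Fin 3) ℤ) : Prop :=
  ∀ A B : SU2,
    (((FreeGroup.lift ![A, B] : FreeGroup (Fin 2) →* SU2) w : SU2)
        : Matrix (Fin 2) (Fin 2) ℂ) =
      MvPolynomial.aeval (tv A B) p • 1
      + MvPolynomial.aeval (tv A B) q • (A : Matrix (Fin 2) (Fin 2) ℂ)
      + MvPolynomial.aeval (tv A B) r • (B : Matrix (Fin 2) (Fin 2) ℂ)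
      + MvPolynomial.aeval (tv A B) s
          • ((A : Matrix (Fin 2) (Fin 2) ℂ) * (B : Matrix (Fin 2) (Fin 2) ℂ))

lemma detA (A : SU2) : (A : Matrix (Fin 2) (Fin 2) ℂ).det = 1 :=
  (Matrix.mem_specialUnitaryGroup_iff.mp A.2).2

lemma good_inv {w : FreeGroup (Fin 2)} {p q r s : MvPolynomial (Fin 3) ℤ}
    (h : Good w p q r s) :
    Good w⁻¹ (p + X 0 * q + X 1 * r + X 2 * s) (-q) (-r) (-s) := by
  intro A B
  set M : SU2 := (FreeGroup.lift ![A, B] : FreeGroup (Fin 2) →* SU2) w with hMdef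
  have hdet : (M : Matrix (Fin 2) (Fin 2) ℂ).det = 1 := detA M
  have hNM : ((M⁻¹ : SU2) : Matrix (Fin 2) (Fin 2) ℂ) * (M : Matrix (Fin 2) (Fin 2) ℂ) = 1 := by
    have := congrArg Subtype.val (inv_mul_cancel M)
    rw [Submonoid.coe_mul] at this
    exact this
  have hMC : (M : Matrix (Fin 2) (Fin 2) ℂ) *
      ((M : Matrix (Fin 2) (Fin 2) ℂ).trace • 1 - (M : Matrix (Fin 2) (Fin 2) ℂ)) = 1 := by
    rw [mul_sub, mul_smul_comm, mul_one, ch2 _ hdet]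
    module
  have hN : ((M⁻¹ : SU2) : Matrix (Fin 2) (Fin 2) ℂ) =
      (M : Matrix (Fin 2) (Fin 2) ℂ).trace • 1 - (M : Matrix (Fin 2) (Fin 2) ℂ) := by
    calc ((M⁻¹ : SU2) : Matrix (Fin 2) (Fin 2) ℂ)
        = ((M⁻¹ : SU2) : Matrix (Fin 2) (Fin 2) ℂ) * 1 := (mul_one _).symm
      _ = ((M⁻¹ : SU2) : Matrix (Fin 2) (Fin 2) ℂ) * ((M : Matrix (Fin 2) (Fin 2) ℂ) *
            ((M : Matrix (Fin 2) (Fin 2) ℂ).trace • 1 - (M : Matrix (Fin 2) (Fin 2) ℂ))) := by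
          rw [hMC]
      _ = (((M⁻¹ : SU2) : Matrix (Fin 2) (Fin 2) ℂ) * (M : Matrix (Fin 2) (Fin 2) ℂ)) *
            ((M : Matrix (Fin 2) (Fin 2) ℂ).trace • 1 - (M : Matrix (Fin 2) (Fin 2) ℂ)) := by
          rw [mul_assoc]
      _ = (M : Matrix (Fin 2) (Fin 2) ℂ).trace • 1 - (M : Matrix (Fin 2) (Fin 2) ℂ) := by
          rw [hNM, one_mul]
  rw [map_inv, ← hMdef, hN, h A B]
  simp only [Matrix.trace_add, Matrix.trace_smul, Matrix.trace_one, map_add, _root_.map_mul, map_neg,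
    MvPolynomial.aeval_X, tv, Matrix.cons_val_zero, Matrix.cons_val_one, Matrix.head_cons,
    Fintype.card_fin, smul_eq_mul, Matrix.cons_val_two, Matrix.tail_cons, Fin.isValue]
  module

lemma good_one : Good 1 1 0 0 0 := by
  intro A B
  simp

lemma good_gen (i : Fin 2) : Good (FreeGroup.of i)
    0 (if i = 0 then 1 else 0) (if i = 0 then 0 else 1) 0 := by
  intro A B
  fin_cases i <;> simp [FreeGroup.lift_apply_of]

lemma good_mul {u v : FreeGroup (Fin 2)} {p q r s p' q' r' s' : MvPolynomial (Fin 3) ℤ}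
    (hu : Good u p q r s) (hv : Good v p' q' r' s') :
    Good (u * v)
      (p'*p + q'*(-q + r*(X 2 - X 0*X 1) - s*X 1) + r'*(-r) + s'*(-(r*X 0) - s))
      (p'*q + q'*(p + q*X 0 + r*X 1 + s*X 2) + r'*(-s) + s'*r)
      (p'*r + q'*(r*X 0 + s) + r'*(p + r*X 1) + s'*(-q + r*X 2))
      (p'*s + q'*(-r) + r'*(q + s*X 1) + s'*(p + q*X 0 + s*X 2)) := by
  intro A B
  rw [_root_.map_mul, Submonoid.coe_mul, hu A B, hv A B,
    combo_mul _ _ (detA A) (detA B)]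
  simp only [map_add, _root_.map_mul, map_sub, map_neg, MvPolynomial.aeval_X, tv,
    Matrix.cons_val_zero, Matrix.cons_val_one, Matrix.head_cons, Matrix.cons_val_two,
    Matrix.tail_cons, Fin.isValue]

lemma key (w : FreeGroup (Fin 2)) : ∃ p q r s : MvPolynomial (Fin 3) ℤ, Good w p q r s := by
  refine FreeGroup.induction_on w ?_ ?_ ?_ ?_
  · exact ⟨1, 0, 0, 0, good_one⟩
  · exact fun i => ⟨_, _, _, _, good_gen i⟩
  · rintro i ⟨p, q, r, s, h⟩
    exact ⟨_, _, _, _, good_inv h⟩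
  · rintro u v ⟨p, q, r, s, hu⟩ ⟨p', q', r', s', hv⟩
    exact ⟨_, _, _, _, good_mul hu hv⟩

/-- For any word `w` in the free group on two generators there is an integer polynomial
`F_w` in three variables with `Tr(w(A,B)) = F_w(Tr A, Tr B, Tr AB)` for all
`A, B ∈ SU(2)`. -/
theorem stmt18 (w : FreeGroup (Fin 2)) :
    ∃ F : MvPolynomial (Fin 3) ℤ, ∀ A B : SU2,
      (((FreeGroup.lift ![A, B] : FreeGroup (Fin 2) →* SU2) w : SU2)
          : Matrix (Fin 2) (Fin 2) ℂ).trace =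
        MvPolynomial.aeval
          ![(A : Matrix (Fin 2) (Fin 2) ℂ).trace, (B : Matrix (Fin 2) (Fin 2) ℂ).trace,
            ((A * B : SU2) : Matrix (Fin 2) (Fin 2) ℂ).trace] F := by
  obtain ⟨p, q, r, s, h⟩ := key w
  refine ⟨MvPolynomial.C 2 * p + X 0 * q + X 1 * r + X 2 * s, fun A B => ?_⟩
  have hv : ![(A : Matrix (Fin 2) (Fin 2) ℂ).trace, (B : Matrix (Fin 2) (Fin 2) ℂ).trace,
      ((A * B : SU2) : Matrix (Fin 2) (Fin 2) ℂ).trace] = tv A B := by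
    simp [tv, Submonoid.coe_mul]
  rw [h A B, hv]
  simp only [Matrix.trace_add, Matrix.trace_smul, Matrix.trace_one, map_add, _root_.map_mul,
    MvPolynomial.aeval_X, MvPolynomial.aeval_C, tv, Matrix.cons_val_zero, Matrix.cons_val_one,
    Matrix.head_cons, Matrix.cons_val_two, Matrix.tail_cons, Fin.isValue, Fintype.card_fin,
    smul_eq_mul, map_ofNat]
  push_cast
  ring

end
end

section
/- Let A, B ∈ SU(2) with Tr(A) = Tr(B) = x (a real number). Then x² − 2 ≤ Re(Tr(AB)) ≤ 2; moreover Tr(AB) = 2 if and only if AB = 1, and Tr(AB) = x² − 2 if and only if A = B. -/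
open Matrix

noncomputable section

lemma su2_param {M : Matrix (Fin 2) (Fin 2) ℂ} (h : M ∈ Matrix.specialUnitaryGroup (Fin 2) ℂ) :
    M 1 1 = starRingEnd ℂ (M 0 0) ∧ M 1 0 = -starRingEnd ℂ (M 0 1) ∧
    (M 0 0).re^2 + (M 0 0).im^2 + (M 0 1).re^2 + (M 0 1).im^2 = 1 := by
  obtain ⟨hu, hd⟩ := Matrix.mem_specialUnitaryGroup_iff.mp h
  have h1 : M * Mᴴ = 1 := by
    simpa [Matrix.star_eq_conjTranspose] using hu.2
  have hinv : M⁻¹ = Mᴴ := Matrix.inv_eq_right_inv h1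
  have hadj : M⁻¹ = M.adjugate := by
    rw [Matrix.inv_def, hd]; simp
  have he : Mᴴ = !![M 1 1, -(M 0 1); -(M 1 0), M 0 0] := by
    rw [← hinv, hadj, Matrix.adjugate_fin_two]
  have h00 : starRingEnd ℂ (M 0 0) = M 1 1 := by
    have := congrFun (congrFun he 0) 0; simpa [Matrix.conjTranspose_apply] using this
  have h01 : starRingEnd ℂ (M 1 0) = -(M 0 1) := by
    have := congrFun (congrFun he 0) 1; simpa [Matrix.conjTranspose_apply] using this
  have hdet : M 0 0 * M 1 1 - M 0 1 * M 1 0 = 1 := by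
    rw [← hd, Matrix.det_fin_two]
  refine ⟨h00.symm, ?_, ?_⟩
  · have := congrArg (starRingEnd ℂ) h01
    simpa using this
  · have h10 : M 1 0 = -starRingEnd ℂ (M 0 1) := by
      have := congrArg (starRingEnd ℂ) h01; simpa using this
    rw [← h00, h10] at hdet
    have := congrArg Complex.re hdet
    simp [Complex.mul_re, Complex.conj_re, Complex.conj_im] at this
    nlinarith [this]


lemma cs_neg {x s p q t u v : ℝ} (h1 : (x/2)^2+s^2+p^2+q^2 = 1)
    (h2 : (x/2)^2+t^2+u^2+v^2 = 1) (h3 : x^2/2 - 2*(s*t+p*u+q*v) = 2) :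
    t = -s ∧ u = -p ∧ v = -q := by
  refine ⟨?_, ?_, ?_⟩ <;>
    nlinarith [sq_nonneg (s+t), sq_nonneg (p+u), sq_nonneg (q+v)]

lemma cs_pos {x s p q t u v : ℝ} (h1 : (x/2)^2+s^2+p^2+q^2 = 1)
    (h2 : (x/2)^2+t^2+u^2+v^2 = 1) (h3 : x^2/2 - 2*(s*t+p*u+q*v) = x^2 - 2) :
    t = s ∧ u = p ∧ v = q := by
  refine ⟨?_, ?_, ?_⟩ <;>
    nlinarith [sq_nonneg (s-t), sq_nonneg (p-u), sq_nonneg (q-v)]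

lemma cs_bnd {x s p q t u v : ℝ} (h1 : (x/2)^2+s^2+p^2+q^2 = 1)
    (h2 : (x/2)^2+t^2+u^2+v^2 = 1) :
    x^2 - 2 ≤ x^2/2 - 2*(s*t+p*u+q*v) ∧ x^2/2 - 2*(s*t+p*u+q*v) ≤ 2 := by
  constructor <;>
    nlinarith [sq_nonneg (s-t), sq_nonneg (p-u), sq_nonneg (q-v),
      sq_nonneg (s+t), sq_nonneg (p+u), sq_nonneg (q+v)]

set_option maxHeartbeats 4000000 in
/-- If `A, B ∈ SU(2)` have common real trace `x`, then
`x² − 2 ≤ Re(Tr(AB)) ≤ 2`, with `Tr(AB) = 2` iff `AB = 1`, and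
`Tr(AB) = x² − 2` iff `A = B`. -/
theorem stmt19 (A B : SU2) (x : ℝ)
    (hA : (A : Matrix (Fin 2) (Fin 2) ℂ).trace = (x : ℂ))
    (hB : (B : Matrix (Fin 2) (Fin 2) ℂ).trace = (x : ℂ)) :
    (x ^ 2 - 2 ≤ (((A * B : SU2) : Matrix (Fin 2) (Fin 2) ℂ).trace).re ∧
      (((A * B : SU2) : Matrix (Fin 2) (Fin 2) ℂ).trace).re ≤ 2) ∧
    (((A * B : SU2) : Matrix (Fin 2) (Fin 2) ℂ).trace = 2 ↔ A * B = 1) ∧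
    (((A * B : SU2) : Matrix (Fin 2) (Fin 2) ℂ).trace = (x : ℂ) ^ 2 - 2 ↔ A = B) := by
  obtain ⟨hA11, hA10, hAn⟩ := su2_param A.2
  obtain ⟨hB11, hB10, hBn⟩ := su2_param B.2
  set a := A.val 0 0 with ha
  set b := A.val 0 1 with hb
  set c := B.val 0 0 with hc
  set d := B.val 0 1 with hd
  have hAre : a.re = x/2 := by
    have := congrArg Complex.re hA
    simp [Matrix.trace_fin_two, hA11, Complex.add_re, Complex.conj_re] at this
    linarith
  have hCre : c.re = x/2 := by
    have := congrArg Complex.re hB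
    simp [Matrix.trace_fin_two, hB11, Complex.add_re, Complex.conj_re] at this
    linarith
  have htr : ((A * B : SU2) : Matrix (Fin 2) (Fin 2) ℂ).trace
      = a*c - b*(starRingEnd ℂ d) - (starRingEnd ℂ b)*d + (starRingEnd ℂ a)*(starRingEnd ℂ c) := by
    show (A.val * B.val).trace = _
    rw [Matrix.trace_fin_two]
    rw [Matrix.mul_apply, Matrix.mul_apply]
    simp [Fin.sum_univ_two, hA11, hA10, hB11, hB10]
    ring
  set s := a.im with hs; set p := b.re with hp; set q := b.im with hq
  set t := c.im with ht; set u := d.re with hu0; set v := d.im with hv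
  have hre : (((A * B : SU2) : Matrix (Fin 2) (Fin 2) ℂ).trace).re
      = x^2/2 - 2*(s*t + p*u + q*v) := by
    rw [htr]
    simp [Complex.add_re, Complex.sub_re, Complex.mul_re, Complex.conj_re, Complex.conj_im,
      hAre, hCre]
    ring
  have him : (((A * B : SU2) : Matrix (Fin 2) (Fin 2) ℂ).trace).im = 0 := by
    rw [htr]
    simp [Complex.add_im, Complex.sub_im, Complex.mul_im, Complex.conj_re, Complex.conj_im,
      hAre, hCre]
    ring
  have hAn' : (x/2)^2 + s^2 + p^2 + q^2 = 1 := by rw [← hAre]; exact hAn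
  have hBn' : (x/2)^2 + t^2 + u^2 + v^2 = 1 := by rw [← hCre]; exact hBn
  clear_value s p q t u v a b c d
  refine ⟨⟨?_, ?_⟩, ⟨?_, ?_⟩, ⟨?_, ?_⟩⟩
  · rw [hre]; exact (cs_bnd hAn' hBn').1
  · rw [hre]; exact (cs_bnd hAn' hBn').2
  · -- trace = 2 → A*B = 1
    intro h2
    have hre2 : x^2/2 - 2*(s*t + p*u + q*v) = 2 := by
      rw [← hre]; rw [h2]; norm_num
    obtain ⟨hst, hpu, hqv⟩ := cs_neg hAn' hBn' hre2
    have hcval : c = starRingEnd ℂ a := by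
      apply Complex.ext
      · rw [Complex.conj_re, hCre, hAre]
      · rw [Complex.conj_im, ← ht, ← hs, hst]
    have hdval : d = -b := by
      apply Complex.ext
      · rw [Complex.neg_re, ← hu0, ← hp, hpu]
      · rw [Complex.neg_im, ← hv, ← hq, hqv]
    have hBval : B.val = A.valᴴ := by
      ext i j
      fin_cases i <;> fin_cases j <;>
        simp [Matrix.conjTranspose_apply, hB11, hB10, hA11, hA10, hcval, hdval, ← ha, ← hb, ← hc, ← hd]
    apply Subtype.ext
    show A.val * B.val = 1
    rw [hBval]
    have hu := (Matrix.mem_specialUnitaryGroup_iff.mp A.2).1.2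
    simpa [Matrix.star_eq_conjTranspose] using hu
  · intro h1
    rw [h1]
    show (1 : Matrix (Fin 2) (Fin 2) ℂ).trace = 2
    simp [Matrix.trace_one]
  · -- trace = x^2 - 2 → A = B
    intro h2
    have hx2 : ((x:ℂ)^2 - 2).re = x^2 - 2 := by
      rw [show ((x:ℂ)^2 - 2) = (((x^2 - 2 : ℝ)):ℂ) by push_cast; ring]
      exact Complex.ofReal_re _
    have hre2 : x^2/2 - 2*(s*t + p*u + q*v) = x^2 - 2 := by
      rw [← hre, h2, hx2]
    obtain ⟨hst, hpu, hqv⟩ := cs_pos hAn' hBn' hre2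
    have hcval : c = a := by
      apply Complex.ext
      · rw [hCre, hAre]
      · rw [← ht, ← hs, hst]
    have hdval : d = b := by
      apply Complex.ext
      · rw [← hu0, ← hp, hpu]
      · rw [← hv, ← hq, hqv]
    apply Subtype.ext
    ext i j
    fin_cases i <;> fin_cases j <;>
      simp [hB11, hB10, hA11, hA10, hcval, hdval, ← ha, ← hb, ← hc, ← hd]
  · intro h1
    subst h1
    have hca : c = a := by rw [hc, ha]
    have hdb : d = b := by rw [hd, hb]
    have ht' : t = s := by rw [ht, hs, hca]
    have hu' : u = p := by rw [hu0, hp, hdb]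
    have hv' : v = q := by rw [hv, hq, hdb]
    apply Complex.ext
    · rw [hre, show ((x:ℂ)^2 - 2) = (((x^2 - 2 : ℝ)):ℂ) by push_cast; ring,
        Complex.ofReal_re, ht', hu', hv']
      nlinarith [hAn']
    · rw [him, show ((x:ℂ)^2 - 2) = (((x^2 - 2 : ℝ)):ℂ) by push_cast; ring,
        Complex.ofReal_im]

end
end
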